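/- arXiv:2009.08573 — 7 statements merged into one kernel-verified Lean document; each statement's English description precedes it below -/
import Mathlib

section
/- Let d ≥ 1, n > d, m = n − d, and let D = D^{(d)} be the d-th order difference matrix. Let S ⊆ {1,…,m} be nonempty and suppose S = S₁ ∪ S₂ where S₁, S₂ are nonempty and |s − t| > d for every s ∈ S₁ and t ∈ S₂. Let σ > 0, let f ∈ ℝⁿ satisfy D_S f = 0, let ε be a random vector in ℝⁿ with i.i.d. coordinates of law N(0, σ²), set y = f + ε and u = (D_S D_Sᵀ)⁻¹ D_S y. Then the random subvectors (u_s)_{s ∈ S₁} and (u_t)_{t ∈ S₂} are independent. -/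
open Matrix BigOperators MeasureTheory ProbabilityTheory

/-- The `d`-th order difference matrix `D^{(d)}`, of size `(n-d) × n`. -/
noncomputable def diffMatrix (d n : ℕ) : Matrix (Fin (n - d)) (Fin n) ℝ := fun i j =>
  if (i : ℕ) ≤ (j : ℕ) ∧ (j : ℕ) ≤ (i : ℕ) + d then
    (-1 : ℝ) ^ (d - ((j : ℕ) - (i : ℕ))) * (Nat.choose d ((j : ℕ) - (i : ℕ)))
  else 0

/-- The submatrix of `A` consisting of the rows indexed by the finite set `S`. -/
noncomputable def rowSub {m n : ℕ} (A : Matrix (Fin m) (Fin n) ℝ) (S : Finset (Fin m)) :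
    Matrix {i // i ∈ S} (Fin n) ℝ := A.submatrix (fun p => (p : Fin m)) id

lemma inv_block_zero {ι : Type*} [Fintype ι] [DecidableEq ι]
    (A : Matrix ι ι ℝ) (c : ι → Bool)
    (hA : ∀ i j, c i ≠ c j → A i j = 0) :
    ∀ i j, c i ≠ c j → A⁻¹ i j = 0 := by
  set P : Matrix ι ι ℝ := Matrix.diagonal (fun i => if c i then 1 else -1) with hP
  have hPP : P * P = 1 := by
    rw [hP, Matrix.diagonal_mul_diagonal]
    ext i j
    simp only [Matrix.diagonal_apply, Matrix.one_apply]
    split_ifs <;> norm_num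
  have hPinv : P⁻¹ = P := Matrix.inv_eq_right_inv hPP
  have hPA : P * A * P = A := by
    ext i j
    simp only [Matrix.mul_diagonal, Matrix.diagonal_mul, hP]
    by_cases h : c i = c j
    · rw [h]; split_ifs <;> ring
    · rw [hA i j h]; ring
  have hAinv : A⁻¹ = P * A⁻¹ * P := by
    conv_lhs => rw [← hPA]
    rw [Matrix.mul_inv_rev, Matrix.mul_inv_rev, hPinv, Matrix.mul_assoc]
  intro i j hij
  have h2 : A⁻¹ i j = (if c i then (1:ℝ) else -1) * A⁻¹ i j * (if c j then 1 else -1) := by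
    conv_lhs => rw [hAinv]
    simp only [Matrix.mul_diagonal, Matrix.diagonal_mul, hP]
  cases hci : c i <;> cases hcj : c j <;> simp [hci, hcj] at h2 hij ⊢ <;> linarith


/-- If `S = S₁ ∪ S₂` with `|s − t| > d` for all `s ∈ S₁`, `t ∈ S₂`, and
`u = (D_S D_Sᵀ)⁻¹ D_S y` with `y = f + ε`, `ε` i.i.d. `N(0,σ²)` and `D_S f = 0`, then
the subvectors `(u_s)_{s ∈ S₁}` and `(u_t)_{t ∈ S₂}` are independent. -/
theorem stmt1 {Ω : Type*} [MeasurableSpace Ω] (P : Measure Ω) [IsProbabilityMeasure P]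
    (d n : ℕ) (hd : 1 ≤ d) (hdn : d < n)
    (S S₁ S₂ : Finset (Fin (n - d))) (hS : S.Nonempty)
    (hS12 : S = S₁ ∪ S₂) (h1 : S₁.Nonempty) (h2 : S₂.Nonempty)
    (hsep : ∀ s ∈ S₁, ∀ t ∈ S₂, (d : ℤ) < |((s : ℕ) : ℤ) - ((t : ℕ) : ℤ)|)
    (σ : ℝ) (hσ : 0 < σ)
    (f : Fin n → ℝ) (hf : ∀ i ∈ S, (diffMatrix d n).mulVec f i = 0)
    (ε : Fin n → Ω → ℝ) (hmeas : ∀ i, Measurable (ε i))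
    (hindep : iIndepFun ε P)
    (hgauss : ∀ i, Measure.map (ε i) P = gaussianReal 0 ⟨σ ^ 2, sq_nonneg σ⟩) :
    let DS := rowSub (diffMatrix d n) S
    let u : Ω → ({i // i ∈ S} → ℝ) :=
      fun ω => ((DS * DSᵀ)⁻¹ * DS).mulVec (fun i => f i + ε i ω)
    IndepFun
      (fun ω => fun p : {i // i ∈ S₁} =>
        u ω ⟨p.1, by rw [hS12]; exact Finset.mem_union_left _ p.2⟩)
      (fun ω => fun q : {i // i ∈ S₂} =>
        u ω ⟨q.1, by rw [hS12]; exact Finset.mem_union_right _ q.2⟩) P := by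
  classical
  intro DS u
  set M : Matrix {i // i ∈ S} (Fin n) ℝ := (DS * DSᵀ)⁻¹ * DS with hM
  -- support of a row of the difference matrix
  have hDsupp : ∀ (t : Fin (n - d)) (j : Fin n),
      diffMatrix d n t j ≠ 0 → (t : ℕ) ≤ (j : ℕ) ∧ (j : ℕ) ≤ (t : ℕ) + d := by
    intro t j h
    by_contra hc
    exact h (by simp only [diffMatrix, if_neg hc])
  -- disjointness of S₁ and S₂
  have hdisj12 : ∀ s, s ∈ S₁ → s ∈ S₂ → False := by
    intro s hs hs2
    have := hsep s hs s hs2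
    simp only [sub_self, abs_zero] at this
    omega
  -- the supports
  set J₁ : Finset (Fin n) :=
    Finset.univ.filter (fun j => ∃ s ∈ S₁, (s : ℕ) ≤ (j : ℕ) ∧ (j : ℕ) ≤ (s : ℕ) + d) with hJ1
  set J₂ : Finset (Fin n) :=
    Finset.univ.filter (fun j => ∃ s ∈ S₂, (s : ℕ) ≤ (j : ℕ) ∧ (j : ℕ) ≤ (s : ℕ) + d) with hJ2
  have hJdisj : Disjoint J₁ J₂ := by
    rw [Finset.disjoint_left]
    intro j hj1 hj2
    rw [hJ1, Finset.mem_filter] at hj1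
    rw [hJ2, Finset.mem_filter] at hj2
    obtain ⟨-, s, hs, hs1, hs2⟩ := hj1
    obtain ⟨-, t, ht, ht1, ht2⟩ := hj2
    have hlt := hsep s hs t ht
    rcases abs_cases (((s : ℕ) : ℤ) - ((t : ℕ) : ℤ)) with ⟨he, -⟩ | ⟨he, -⟩ <;> rw [he] at hlt <;> omega
  -- grading
  set c : {i // i ∈ S} → Bool := fun x => decide (x.1 ∈ S₁) with hc
  -- cross entries of DS * DSᵀ vanish
  have hrowzero : ∀ (a b : Fin (n - d)), a ∈ S₁ → b ∈ S₂ →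
      ∀ j : Fin n, diffMatrix d n a j * diffMatrix d n b j = 0 := by
    intro a b ha hb j
    by_contra hne
    have h1 := hDsupp a j (fun h => hne (by rw [h, zero_mul]))
    have h2 := hDsupp b j (fun h => hne (by rw [h, mul_zero]))
    have hlt := hsep a ha b hb
    rcases abs_cases (((a : ℕ) : ℤ) - ((b : ℕ) : ℤ)) with ⟨he, -⟩ | ⟨he, -⟩ <;> rw [he] at hlt <;> omega
  have hAcross : ∀ i j : {x // x ∈ S}, c i ≠ c j → (DS * DSᵀ) i j = 0 := by
    intro i j hij
    rw [Matrix.mul_apply]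
    apply Finset.sum_eq_zero
    intro k _
    have hDSi : DS i k = diffMatrix d n i.1 k := rfl
    have hDSj : DSᵀ k j = diffMatrix d n j.1 k := rfl
    rw [hDSi, hDSj]
    -- one of i, j is in S₁ and the other is in S₂
    by_cases hi1 : i.1 ∈ S₁
    · have hj1 : j.1 ∉ S₁ := by
        intro hj1; apply hij; rw [hc]; simp [hi1, hj1]
      have hj2 : j.1 ∈ S₂ := by
        have hm : j.1 ∈ S₁ ∪ S₂ := by rw [← hS12]; exact j.2
        rcases Finset.mem_union.mp hm with h | h
        · exact absurd h hj1
        · exact h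
      exact hrowzero i.1 j.1 hi1 hj2 k
    · have hi2 : i.1 ∈ S₂ := by
        have hm : i.1 ∈ S₁ ∪ S₂ := by rw [← hS12]; exact i.2
        rcases Finset.mem_union.mp hm with h | h
        · exact absurd h hi1
        · exact h
      have hj1 : j.1 ∈ S₁ := by
        by_contra hj1; apply hij; rw [hc]; simp [hi1, hj1]
      rw [mul_comm]
      exact hrowzero j.1 i.1 hj1 hi2 k
  have hinv := inv_block_zero (DS * DSᵀ) c hAcross
  -- rows of M for S₁ vanish outside J₁
  have hM1 : ∀ (q : {x // x ∈ S}), q.1 ∈ S₁ → ∀ j ∉ J₁, M q j = 0 := by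
    intro q hq j hj
    rw [hM, Matrix.mul_apply]
    apply Finset.sum_eq_zero
    intro t _
    by_cases ht1 : t.1 ∈ S₁
    · have hDz : DS t j = 0 := by
        by_contra hne
        have := hDsupp t.1 j hne
        exact hj (by rw [hJ1]; simp only [Finset.mem_filter, Finset.mem_univ, true_and]
                     exact ⟨t.1, ht1, this⟩)
      rw [hDz, mul_zero]
    · have hct : c q ≠ c t := by rw [hc]; simp [hq, ht1]
      rw [hinv q t hct, zero_mul]
  have hM2 : ∀ (q : {x // x ∈ S}), q.1 ∈ S₂ → ∀ j ∉ J₂, M q j = 0 := by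
    intro q hq j hj
    have hq1 : q.1 ∉ S₁ := fun h => hdisj12 q.1 h hq
    rw [hM, Matrix.mul_apply]
    apply Finset.sum_eq_zero
    intro t _
    by_cases ht1 : t.1 ∈ S₁
    · have hct : c q ≠ c t := by rw [hc]; simp [hq1, ht1]
      rw [hinv q t hct, zero_mul]
    · have ht2 : t.1 ∈ S₂ := by
        have hm : t.1 ∈ S₁ ∪ S₂ := by rw [← hS12]; exact t.2
        rcases Finset.mem_union.mp hm with h | h
        · exact absurd h ht1
        · exact h
      have hDz : DS t j = 0 := by
        by_contra hne
        have := hDsupp t.1 j hne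
        exact hj (by rw [hJ2]; simp only [Finset.mem_filter, Finset.mem_univ, true_and]
                     exact ⟨t.1, ht2, this⟩)
      rw [hDz, mul_zero]
  -- membership maps
  have hmem1 : ∀ p : {i // i ∈ S₁}, p.1 ∈ S := by
    intro p; rw [hS12]; exact Finset.mem_union_left _ p.2
  have hmem2 : ∀ p : {i // i ∈ S₂}, p.1 ∈ S := by
    intro p; rw [hS12]; exact Finset.mem_union_right _ p.2
  -- the composing maps
  set φ₁ : ({x // x ∈ J₁} → ℝ) → ({i // i ∈ S₁} → ℝ) :=
    fun v p => ∑ j : Fin n, M ⟨p.1, hmem1 p⟩ j * (f j + if h : j ∈ J₁ then v ⟨j, h⟩ else 0)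
    with hφ₁
  set φ₂ : ({x // x ∈ J₂} → ℝ) → ({i // i ∈ S₂} → ℝ) :=
    fun v p => ∑ j : Fin n, M ⟨p.1, hmem2 p⟩ j * (f j + if h : j ∈ J₂ then v ⟨j, h⟩ else 0)
    with hφ₂
  have hφ₁m : Measurable φ₁ := by
    apply measurable_pi_lambda
    intro p
    apply Finset.measurable_sum
    intro j _
    by_cases h : j ∈ J₁
    · simp only [dif_pos h]
      exact (measurable_const.add (measurable_pi_apply (⟨j, h⟩ : {x // x ∈ J₁}))).const_mul _
    · simp only [dif_neg h]
      exact measurable_const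
  have hφ₂m : Measurable φ₂ := by
    apply measurable_pi_lambda
    intro p
    apply Finset.measurable_sum
    intro j _
    by_cases h : j ∈ J₂
    · simp only [dif_pos h]
      exact (measurable_const.add (measurable_pi_apply (⟨j, h⟩ : {x // x ∈ J₂}))).const_mul _
    · simp only [dif_neg h]
      exact measurable_const
  have hεind : IndepFun (fun ω (j : {x // x ∈ J₁}) => ε j ω)
      (fun ω (j : {x // x ∈ J₂}) => ε j ω) P :=
    hindep.indepFun_finset J₁ J₂ hJdisj hmeas
  have hcomp := hεind.comp hφ₁m hφ₂m
  have heq1 : (fun ω => fun p : {i // i ∈ S₁} =>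
      u ω ⟨p.1, by rw [hS12]; exact Finset.mem_union_left _ p.2⟩)
      = φ₁ ∘ (fun ω (j : {x // x ∈ J₁}) => ε j ω) := by
    funext ω p
    show M.mulVec (fun i => f i + ε i ω) _ = _
    rw [Matrix.mulVec, Function.comp_apply, hφ₁]
    simp only [dotProduct]
    apply Finset.sum_congr rfl
    intro j _
    by_cases h : j ∈ J₁
    · simp [h]
    · rw [hM1 ⟨p.1, hmem1 p⟩ p.2 j h]
      simp
  have heq2 : (fun ω => fun q : {i // i ∈ S₂} =>
      u ω ⟨q.1, by rw [hS12]; exact Finset.mem_union_right _ q.2⟩)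
      = φ₂ ∘ (fun ω (j : {x // x ∈ J₂}) => ε j ω) := by
    funext ω q
    show M.mulVec (fun i => f i + ε i ω) _ = _
    rw [Matrix.mulVec, Function.comp_apply, hφ₂]
    simp only [dotProduct]
    apply Finset.sum_congr rfl
    intro j _
    by_cases h : j ∈ J₂
    · simp [h]
    · rw [hM2 ⟨q.1, hmem2 q⟩ q.2 j h]
      simp
  rw [heq1, heq2]
  exact hcomp
end

section
/- Let D be an m×n real matrix, y ∈ ℝⁿ, and λ ≥ 0. Suppose û minimizes the function u ↦ (1/2)‖y − Dᵀu‖₂² over the hypercube C = {u ∈ ℝ^m : ‖u‖_∞ ≤ λ}. Then f̂ := y − Dᵀû is the unique minimizer over ℝⁿ of the trend filtering objective f ↦ (1/2)‖y − f‖₂² + λ‖Df‖₁. -/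
open Matrix BigOperators

/-- The trend filtering objective `f ↦ (1/2)‖y − f‖₂² + λ‖Df‖₁`. -/
noncomputable def tfObj {m n : ℕ} (D : Matrix (Fin m) (Fin n) ℝ) (y : Fin n → ℝ)
    (lam : ℝ) (f : Fin n → ℝ) : ℝ :=
  (1 / 2) * ∑ i, (y i - f i) ^ 2 + lam * ∑ j, |D.mulVec f j|

/-- The dual objective `u ↦ (1/2)‖y − Dᵀu‖₂²`. -/
noncomputable def tfDualObj {m n : ℕ} (D : Matrix (Fin m) (Fin n) ℝ) (y : Fin n → ℝ)
    (u : Fin m → ℝ) : ℝ :=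
  (1 / 2) * ∑ i, (y i - Dᵀ.mulVec u i) ^ 2

/-- If `0 ≤ t*a + t²*c` for all small positive `t` and `c ≥ 0`, then `0 ≤ a`. -/
lemma aux_small_t (a c : ℝ) (hc : 0 ≤ c)
    (h : ∀ t : ℝ, 0 < t → t ≤ 1 → 0 ≤ t * a + t ^ 2 * c) : 0 ≤ a := by
  by_contra hn
  push_neg at hn
  rcases eq_or_lt_of_le hc with hc0 | hc0
  · have := h 1 one_pos le_rfl
    nlinarith
  · set t := min 1 (-a / (2 * c)) with ht
    have ht0 : 0 < t := lt_min one_pos (div_pos (by linarith) (by linarith))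
    have ht1 : t ≤ 1 := min_le_left _ _
    have htc : t ≤ -a / (2 * c) := min_le_right _ _
    have h2 : t * c ≤ -a / 2 := by
      have := mul_le_mul_of_nonneg_right htc (le_of_lt hc0)
      calc t * c ≤ (-a / (2 * c)) * c := this
        _ = -a / 2 := by field_simp
    have h3 := h t ht0 ht1
    nlinarith

/-- Adjoint identity: `⟨f, Dᵀu⟩ = ⟨u, Df⟩`. -/
lemma aux_adjoint {m n : ℕ} (D : Matrix (Fin m) (Fin n) ℝ) (f : Fin n → ℝ)
    (u : Fin m → ℝ) :
    ∑ i, f i * Dᵀ.mulVec u i = ∑ j, u j * D.mulVec f j := by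
  simp only [Matrix.mulVec, dotProduct, Matrix.transpose_apply, Finset.mul_sum]
  rw [Finset.sum_comm]
  exact Finset.sum_congr rfl fun j _ => Finset.sum_congr rfl fun i _ => by ring

lemma aux_mulVec_comb {m n : ℕ} (D : Matrix (Fin m) (Fin n) ℝ) (u v : Fin m → ℝ)
    (t : ℝ) (i : Fin n) :
    Dᵀ.mulVec (fun j => u j + t * v j) i = Dᵀ.mulVec u i + t * Dᵀ.mulVec v i := by
  simp only [Matrix.mulVec, dotProduct, mul_add, Finset.sum_add_distrib,
    Finset.mul_sum]
  congr 1
  exact Finset.sum_congr rfl fun j _ => by ring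

lemma aux_mulVec_sub {m n : ℕ} (D : Matrix (Fin m) (Fin n) ℝ) (f g : Fin n → ℝ)
    (j : Fin m) :
    D.mulVec (fun i => f i - g i) j = D.mulVec f j - D.mulVec g j := by
  simp only [Matrix.mulVec, dotProduct, mul_sub, Finset.sum_sub_distrib]

/-- Primal–dual correspondence: if `û` minimizes the dual objective over the hypercube
`{u : ‖u‖_∞ ≤ λ}`, then `f̂ = y − Dᵀû` is the unique minimizer of the trend filtering
objective. -/
theorem stmt4 {m n : ℕ} (D : Matrix (Fin m) (Fin n) ℝ) (y : Fin n → ℝ)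
    (lam : ℝ) (hlam : 0 ≤ lam) (uhat : Fin m → ℝ)
    (hfeas : ∀ j, |uhat j| ≤ lam)
    (hmin : ∀ u : Fin m → ℝ, (∀ j, |u j| ≤ lam) →
      tfDualObj D y uhat ≤ tfDualObj D y u) :
    ∀ f : Fin n → ℝ, f ≠ (fun i => y i - Dᵀ.mulVec uhat i) →
      tfObj D y lam (fun i => y i - Dᵀ.mulVec uhat i) < tfObj D y lam f := by
  set fhat : Fin n → ℝ := fun i => y i - Dᵀ.mulVec uhat i with hfhatdef
  intro f hf
  -- Variational inequality for the minimizer over the convex hypercube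
  have hVI : ∀ u : Fin m → ℝ, (∀ j, |u j| ≤ lam) →
      ∑ j, (u j - uhat j) * D.mulVec fhat j ≤ 0 := by
    intro u hu
    set v : Fin m → ℝ := fun j => u j - uhat j with hv
    have key : 0 ≤ -(∑ j, v j * D.mulVec fhat j) := by
      apply aux_small_t _ ((1 / 2) * ∑ i, (Dᵀ.mulVec v i) ^ 2)
      · positivity
      · intro t ht0 ht1
        have hfeast : ∀ j, |uhat j + t * v j| ≤ lam := by
          intro j
          have e : uhat j + t * v j = (1 - t) * uhat j + t * u j := by
            simp only [hv]; ring
          rw [e]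
          calc |(1 - t) * uhat j + t * u j| ≤ |(1 - t) * uhat j| + |t * u j| :=
                abs_add_le _ _
            _ = (1 - t) * |uhat j| + t * |u j| := by
                rw [abs_mul, abs_mul, abs_of_nonneg (by linarith : (0:ℝ) ≤ 1 - t),
                  abs_of_nonneg (le_of_lt ht0)]
            _ ≤ (1 - t) * lam + t * lam := by
                have := hfeas j; have := hu j
                have h1 : (1 - t) * |uhat j| ≤ (1 - t) * lam :=
                  mul_le_mul_of_nonneg_left (hfeas j) (by linarith)
                have h2 : t * |u j| ≤ t * lam :=
                  mul_le_mul_of_nonneg_left (hu j) (le_of_lt ht0)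
                linarith
            _ = lam := by ring
        have hd := hmin (fun j => uhat j + t * v j) hfeast
        have hexp : ∑ i, (y i - Dᵀ.mulVec (fun j => uhat j + t * v j) i) ^ 2 =
            ∑ i, ((y i - Dᵀ.mulVec uhat i) ^ 2
              - 2 * t * (fhat i * Dᵀ.mulVec v i) + t ^ 2 * (Dᵀ.mulVec v i) ^ 2) := by
          refine Finset.sum_congr rfl fun i _ => ?_
          rw [aux_mulVec_comb]
          simp only [hfhatdef]
          ring
        have hsplit : ∑ i, ((y i - Dᵀ.mulVec uhat i) ^ 2
              - 2 * t * (fhat i * Dᵀ.mulVec v i) + t ^ 2 * (Dᵀ.mulVec v i) ^ 2) =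
            ∑ i, (y i - Dᵀ.mulVec uhat i) ^ 2
              - 2 * t * ∑ i, fhat i * Dᵀ.mulVec v i
              + t ^ 2 * ∑ i, (Dᵀ.mulVec v i) ^ 2 := by
          rw [Finset.sum_add_distrib, Finset.sum_sub_distrib, Finset.mul_sum,
            Finset.mul_sum]
        have hadj := aux_adjoint D fhat v
        simp only [tfDualObj] at hd
        rw [hexp, hsplit] at hd
        nlinarith [hd, hadj]
    have := aux_adjoint D fhat v
    simp only [hv] at key ⊢
    linarith
  -- Key inequality 1: `λ‖Df̂‖₁ ≤ ⟨û, Df̂⟩`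
  have key1 : lam * ∑ j, |D.mulVec fhat j| ≤ ∑ j, uhat j * D.mulVec fhat j := by
    set u : Fin m → ℝ := fun j => if 0 ≤ D.mulVec fhat j then lam else -lam with hu
    have hufeas : ∀ j, |u j| ≤ lam := by
      intro j
      simp only [hu]
      split <;> simp [abs_of_nonneg hlam, abs_of_nonpos (neg_nonpos.mpr hlam), hlam]
    have h1 := hVI u hufeas
    have h2 : ∑ j, u j * D.mulVec fhat j = ∑ j, lam * |D.mulVec fhat j| := by
      refine Finset.sum_congr rfl fun j _ => ?_
      simp only [hu]
      split_ifs with h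
      · rw [abs_of_nonneg h]
      · push_neg at h; rw [abs_of_neg h]; ring
    have h3 : ∑ j, (u j - uhat j) * D.mulVec fhat j =
        ∑ j, u j * D.mulVec fhat j - ∑ j, uhat j * D.mulVec fhat j := by
      rw [← Finset.sum_sub_distrib]
      exact Finset.sum_congr rfl fun j _ => by ring
    rw [h3, h2, ← Finset.mul_sum] at h1
    linarith
  -- Key inequality 2: `⟨û, Df⟩ ≤ λ‖Df‖₁`
  have key2 : ∑ j, uhat j * D.mulVec f j ≤ lam * ∑ j, |D.mulVec f j| := by
    rw [Finset.mul_sum]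
    refine Finset.sum_le_sum fun j _ => ?_
    calc uhat j * D.mulVec f j ≤ |uhat j * D.mulVec f j| := le_abs_self _
      _ = |uhat j| * |D.mulVec f j| := abs_mul _ _
      _ ≤ lam * |D.mulVec f j| := mul_le_mul_of_nonneg_right (hfeas j) (abs_nonneg _)
  -- Quadratic expansion
  have E1 : ∑ i, (y i - f i) ^ 2 = ∑ i, (y i - fhat i) ^ 2
      - 2 * ∑ i, (f i - fhat i) * Dᵀ.mulVec uhat i
      + ∑ i, (f i - fhat i) ^ 2 := by
    have e : ∀ i, (y i - f i) ^ 2 = (y i - fhat i) ^ 2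
        - 2 * ((f i - fhat i) * Dᵀ.mulVec uhat i) + (f i - fhat i) ^ 2 := by
      intro i
      have h : y i - fhat i = Dᵀ.mulVec uhat i := by simp [hfhatdef]
      rw [← h]; ring
    rw [Finset.sum_congr rfl fun i _ => e i, Finset.sum_add_distrib,
      Finset.sum_sub_distrib, Finset.mul_sum]
  -- adjoint on the cross term
  have E2 : ∑ i, (f i - fhat i) * Dᵀ.mulVec uhat i =
      ∑ j, uhat j * D.mulVec f j - ∑ j, uhat j * D.mulVec fhat j := by
    have := aux_adjoint D (fun i => f i - fhat i) uhat
    rw [this]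
    rw [← Finset.sum_sub_distrib]
    refine Finset.sum_congr rfl fun j _ => ?_
    rw [aux_mulVec_sub]; ring
  -- strict positivity of the quadratic gap
  have hQ : 0 < ∑ i, (f i - fhat i) ^ 2 := by
    obtain ⟨i0, hi0⟩ : ∃ i, f i ≠ fhat i := by
      by_contra h
      push_neg at h
      exact hf (funext h)
    refine Finset.sum_pos' (fun i _ => sq_nonneg _) ⟨i0, Finset.mem_univ _, ?_⟩
    have : f i0 - fhat i0 ≠ 0 := sub_ne_zero.mpr hi0
    positivity
  simp only [tfObj]
  have hdf : ∀ i, y i - (y i - Dᵀ.mulVec uhat i) = y i - fhat i := fun i => by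
    simp [hfhatdef]
  have e0 : ∑ i, (y i - (y i - Dᵀ.mulVec uhat i)) ^ 2 = ∑ i, (y i - fhat i) ^ 2 :=
    Finset.sum_congr rfl fun i _ => by rw [hdf i]
  have e1 : ∑ j, |D.mulVec (fun i => y i - Dᵀ.mulVec uhat i) j| =
      ∑ j, |D.mulVec fhat j| := rfl
  rw [e0, e1]
  nlinarith [key1, key2, E1, E2, hQ]
end

section
/- Let D be an m×n real matrix, y ∈ ℝⁿ, λ ≥ 0, and f̂ ∈ ℝⁿ. Then f̂ minimizes the function f ↦ (1/2)‖y − f‖₂² + λ‖Df‖₁ over ℝⁿ if and only if there exists γ ∈ ℝ^m such that ‖γ‖_∞ ≤ 1, γᵢ = 1 whenever [Df̂]ᵢ > 0, γᵢ = −1 whenever [Df̂]ᵢ < 0, and y − f̂ = λ Dᵀγ. -/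
open Matrix BigOperators

/-- A choice of sign: `1` if `0 ≤ x`, `-1` otherwise. -/
noncomputable def sgn (x : ℝ) : ℝ := if 0 ≤ x then 1 else -1

lemma sgn_abs (x : ℝ) : sgn x * x = |x| := by
  unfold sgn; split <;> [rw [abs_of_nonneg ‹_›]; rw [abs_of_neg (lt_of_not_ge ‹_›)]] <;> ring

lemma abs_sgn (x : ℝ) : |sgn x| = 1 := by unfold sgn; split <;> simp

lemma dot_trans {m n : ℕ} (D : Matrix (Fin m) (Fin n) ℝ) (γ : Fin m → ℝ) (x : Fin n → ℝ) :
    ∑ i, Dᵀ.mulVec γ i * x i = ∑ j, γ j * D.mulVec x j := by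
  simp only [Matrix.mulVec, dotProduct, Matrix.transpose_apply, Finset.sum_mul,
    Finset.mul_sum]
  rw [Finset.sum_comm]
  exact Finset.sum_congr rfl fun j _ => Finset.sum_congr rfl fun i _ => by ring

/-- The directional-derivative inequality satisfied by a minimizer. -/
lemma tf_dir_ineq {m n : ℕ} (D : Matrix (Fin m) (Fin n) ℝ) (y : Fin n → ℝ)
    (lam : ℝ) (fhat : Fin n → ℝ)
    (hmin : ∀ f : Fin n → ℝ, tfObj D y lam fhat ≤ tfObj D y lam f)
    (v : Fin n → ℝ) :
    ∑ i, (y i - fhat i) * v i ≤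
      lam * ∑ j, (if D.mulVec fhat j = 0 then |D.mulVec v j|
        else sgn (D.mulVec fhat j) * D.mulVec v j) := by
  set b := D.mulVec fhat with hb
  set Dv := D.mulVec v with hDv
  set w : Fin m → ℝ := fun j => if b j = 0 then |Dv j| else sgn (b j) * Dv j with hw
  show ∑ i, (y i - fhat i) * v i ≤ lam * ∑ j, w j
  -- choose δ
  obtain ⟨δ, hδpos, hδ⟩ : ∃ δ : ℝ, 0 < δ ∧ ∀ j, b j ≠ 0 → δ * |Dv j| ≤ |b j| := by
    set F : Finset ℝ := insert (1:ℝ)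
      ((Finset.univ.filter fun j => b j ≠ 0).image fun j => |b j| / (|Dv j| + 1)) with hF
    have hne : F.Nonempty := Finset.insert_nonempty _ _
    have hposF : ∀ x ∈ F, (0:ℝ) < x := by
      intro x hx
      rcases Finset.mem_insert.1 hx with h | h
      · rw [h]; norm_num
      · obtain ⟨j, hj, hj2⟩ := Finset.mem_image.1 h
        rw [← hj2]
        exact div_pos (abs_pos.2 (Finset.mem_filter.1 hj).2) (by positivity)
    have h0 : 0 < F.min' hne := hposF _ (F.min'_mem hne)
    refine ⟨F.min' hne, h0, ?_⟩
    intro j hbj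
    have hmem : |b j| / (|Dv j| + 1) ∈ F :=
      Finset.mem_insert_of_mem (Finset.mem_image.2 ⟨j, Finset.mem_filter.2
        ⟨Finset.mem_univ _, hbj⟩, rfl⟩)
    have hle : F.min' hne ≤ |b j| / (|Dv j| + 1) := Finset.min'_le _ _ hmem
    have h1 : F.min' hne * (|Dv j| + 1) ≤ |b j| := by
      rw [← le_div_iff₀ (by positivity)]; exact hle
    nlinarith [abs_nonneg (Dv j), h0.le]
  set A : ℝ := -∑ i, (y i - fhat i) * v i + lam * ∑ j, w j with hA
  set B : ℝ := (1/2) * ∑ i, (v i)^2 with hB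
  have hBnn : 0 ≤ B := by
    rw [hB]; positivity
  have hkey : ∀ t : ℝ, 0 < t → t ≤ δ → 0 ≤ t * A + t^2 * B := by
    intro t ht htδ
    have habs : ∀ j, |b j + t * Dv j| = |b j| + t * w j := by
      intro j
      by_cases hbj : b j = 0
      · have hwj : w j = |Dv j| := by simp [hw, hbj]
        rw [hbj, hwj, zero_add, abs_mul, abs_of_pos ht, abs_zero, zero_add]
      · have hle : t * |Dv j| ≤ |b j| :=
          le_trans (mul_le_mul_of_nonneg_right htδ (abs_nonneg _)) (hδ j hbj)
        have hwj : w j = sgn (b j) * Dv j := by rw [hw]; simp [hbj]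
        rcases lt_trichotomy (b j) 0 with h | h | h
        · have hsg : sgn (b j) = -1 := by unfold sgn; rw [if_neg (not_le.2 h)]
          have : b j + t * Dv j ≤ 0 := by
            have : t * Dv j ≤ t * |Dv j| :=
              mul_le_mul_of_nonneg_left (le_abs_self _) ht.le
            rw [abs_of_neg h] at hle
            linarith
          rw [abs_of_nonpos this, abs_of_neg h, hwj, hsg]; ring
        · exact absurd h hbj
        · have hsg : sgn (b j) = 1 := by unfold sgn; rw [if_pos h.le]
          have : 0 ≤ b j + t * Dv j := by
            have : -(t * |Dv j|) ≤ t * Dv j := by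
              have := mul_le_mul_of_nonneg_left (neg_abs_le (Dv j)) ht.le
              linarith [this]
            rw [abs_of_pos h] at hle
            linarith
          rw [abs_of_nonneg this, abs_of_pos h, hwj, hsg]; ring
    have hobj := hmin (fhat + t • v)
    have hDexp : ∀ j, D.mulVec (fhat + t • v) j = b j + t * Dv j := by
      intro j
      rw [Matrix.mulVec_add, Matrix.mulVec_smul]
      simp [hb, hDv]
    have hquad : ∑ i, (y i - (fhat + t • v) i) ^ 2 =
        ∑ i, (y i - fhat i)^2 - 2*t*∑ i, (y i - fhat i) * v i + t^2 * ∑ i, (v i)^2 := by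
      rw [Finset.sum_congr rfl (fun i (_ : i ∈ Finset.univ) =>
        (by simp only [Pi.add_apply, Pi.smul_apply, smul_eq_mul]; ring :
          (y i - (fhat + t • v) i) ^ 2 = (y i - fhat i)^2
            - 2*t*((y i - fhat i) * v i) + t^2 * (v i)^2))]
      rw [Finset.sum_add_distrib, Finset.sum_sub_distrib, ← Finset.mul_sum, ← Finset.mul_sum]
    have habssum : ∑ j, |D.mulVec (fhat + t • v) j| = ∑ j, |b j| + t * ∑ j, w j := by
      rw [Finset.sum_congr rfl (fun j (_ : j ∈ Finset.univ) => by rw [hDexp j, habs j])]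
      rw [Finset.sum_add_distrib, ← Finset.mul_sum]
    have : tfObj D y lam (fhat + t • v) = tfObj D y lam fhat + t * A + t^2 * B := by
      unfold tfObj
      rw [hquad, habssum, ← hb, hA, hB]
      ring
    rw [this] at hobj
    linarith
  -- conclude A ≥ 0
  by_contra hcon
  push_neg at hcon
  have hAneg : A < 0 := by rw [hA]; linarith
  set t : ℝ := min δ (-A / (2*B+1)) with htdef
  have htpos : 0 < t := lt_min hδpos (div_pos (neg_pos.2 hAneg) (by linarith))
  have htδ : t ≤ δ := min_le_left _ _
  have ht2 : t * (2*B+1) ≤ -A := by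
    rw [← le_div_iff₀ (by linarith)]
    exact min_le_right _ _
  have := hkey t htpos htδ
  nlinarith [mul_pos htpos htpos, mul_le_mul_of_nonneg_left ht2 htpos.le,
    mul_nonneg htpos.le hBnn]

/-- Existence of the dual certificate from the directional inequality. -/
lemma tf_certificate {m n : ℕ} (D : Matrix (Fin m) (Fin n) ℝ) (y : Fin n → ℝ)
    (lam : ℝ) (fhat : Fin n → ℝ)
    (hstar : ∀ v : Fin n → ℝ, ∑ i, (y i - fhat i) * v i ≤
      lam * ∑ j, (if D.mulVec fhat j = 0 then |D.mulVec v j|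
        else sgn (D.mulVec fhat j) * D.mulVec v j)) :
    ∃ γ : Fin m → ℝ, (∀ i, |γ i| ≤ 1) ∧
        (∀ i, 0 < D.mulVec fhat i → γ i = 1) ∧
        (∀ i, D.mulVec fhat i < 0 → γ i = -1) ∧
        (∀ i, y i - fhat i = lam * Dᵀ.mulVec γ i) := by
  set b := D.mulVec fhat with hb
  set Γ : Set (Fin m → ℝ) := Set.pi Set.univ (fun j =>
    if 0 < b j then Set.Icc (1:ℝ) 1 else if b j < 0 then Set.Icc (-1:ℝ) (-1)
      else Set.Icc (-1:ℝ) 1) with hΓ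
  set L : (Fin m → ℝ) →ₗ[ℝ] (Fin n → ℝ) := lam • Dᵀ.mulVecLin with hL
  set K : Set (Fin n → ℝ) := L '' Γ with hK
  have hΓconv : Convex ℝ Γ := convex_pi fun j _ => by split_ifs <;> exact convex_Icc _ _
  have hΓcomp : IsCompact Γ := isCompact_univ_pi fun j => by split_ifs <;> exact isCompact_Icc
  have hKconv : Convex ℝ K := hΓconv.linear_image L
  have hKcomp : IsCompact K := hΓcomp.image (LinearMap.continuous_of_finiteDimensional L)
  have hKclosed : IsClosed K := hKcomp.isClosed
  set c : Fin n → ℝ := fun i => y i - fhat i with hc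
  have hcK : c ∈ K := by
    by_contra hcon
    obtain ⟨φ, u, hφK, hφc⟩ := geometric_hahn_banach_closed_point hKconv hKclosed hcon
    set v : Fin n → ℝ := fun j => φ (Pi.single j 1) with hv
    have hφeval : ∀ z : Fin n → ℝ, φ z = ∑ i, z i * v i := by
      intro z
      conv_lhs => rw [← Finset.univ_sum_single z]
      rw [map_sum]
      refine Finset.sum_congr rfl fun i _ => ?_
      have hsingle : Pi.single i (z i) = z i • (Pi.single i (1:ℝ) : Fin n → ℝ) := by
        funext k
        simp only [Pi.smul_apply, smul_eq_mul, Pi.single_apply]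
        split_ifs <;> ring
      rw [hsingle, _root_.map_smul, smul_eq_mul, hv]
    -- the maximizing γ*
    set γs : Fin m → ℝ := fun j => if b j = 0 then sgn (D.mulVec v j) else sgn (b j) with hγs
    have hγsΓ : γs ∈ Γ := by
      intro j _
      dsimp only
      rcases lt_trichotomy (b j) 0 with h | h | h
      · rw [if_neg (asymm h), if_pos h]
        have hh : γs j = -1 := by
          simp only [hγs]
          rw [if_neg h.ne]
          unfold sgn; rw [if_neg (not_le.2 h)]
        rw [hh]; exact Set.mem_Icc.2 ⟨le_refl _, le_refl _⟩
      · rw [if_neg (by simp [h]), if_neg (by simp [h])]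
        have hh : γs j = sgn (D.mulVec v j) := by simp [hγs, h]
        rw [hh]
        exact Set.mem_Icc.2 (abs_le.1 (le_of_eq (abs_sgn _)))
      · rw [if_pos h]
        have hh : γs j = 1 := by
          simp only [hγs]
          rw [if_neg h.ne']
          unfold sgn; rw [if_pos h.le]
        rw [hh]; exact Set.mem_Icc.2 ⟨le_refl _, le_refl _⟩
    have hLγs : φ (L γs) = lam * ∑ j, (if b j = 0 then |D.mulVec v j|
        else sgn (b j) * D.mulVec v j) := by
      rw [hφeval]
      have : ∀ i, L γs i = lam * Dᵀ.mulVec γs i := fun i => by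
        simp [hL, Matrix.mulVecLin, Matrix.mulVec_transpose]
      rw [Finset.sum_congr rfl fun i _ => by rw [this i]]
      have : ∑ i, lam * Dᵀ.mulVec γs i * v i = lam * ∑ i, Dᵀ.mulVec γs i * v i := by
        rw [Finset.mul_sum]; exact Finset.sum_congr rfl fun i _ => by ring
      rw [this, dot_trans D γs v]
      congr 1
      refine Finset.sum_congr rfl fun j _ => ?_
      by_cases hbj : b j = 0
      · simp only [hγs, if_pos hbj]
        rw [sgn_abs]
      · simp only [hγs, if_neg hbj]
    have h1 := hφK _ ⟨γs, hγsΓ, rfl⟩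
    have h2 := hstar v
    rw [hφeval c] at hφc
    rw [hLγs] at h1
    have heq : ∑ i, c i * v i = ∑ i, (y i - fhat i) * v i := rfl
    rw [heq] at hφc
    linarith
  obtain ⟨γ, hγΓ, hγeq⟩ := hcK
  have hmem : ∀ j, γ j ∈ (if 0 < b j then Set.Icc (1:ℝ) 1
      else if b j < 0 then Set.Icc (-1:ℝ) (-1) else Set.Icc (-1:ℝ) 1) := by
    intro j
    exact hγΓ j (Set.mem_univ j)
  refine ⟨γ, ?_, ?_, ?_, ?_⟩
  · intro j
    have := hmem j
    rcases lt_trichotomy (b j) 0 with h | h | h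
    · rw [if_neg (asymm h), if_pos h, Set.mem_Icc] at this
      rw [abs_le]; constructor <;> linarith [this.1, this.2]
    · rw [if_neg (by simp [h]), if_neg (by simp [h]), Set.mem_Icc] at this
      exact abs_le.2 this
    · rw [if_pos h, Set.mem_Icc] at this
      rw [abs_le]; constructor <;> linarith [this.1, this.2]
  · intro j hj
    have := hmem j
    rw [if_pos hj, Set.mem_Icc] at this
    linarith [this.1, this.2]
  · intro j hj
    have := hmem j
    rw [if_neg (asymm hj), if_pos hj, Set.mem_Icc] at this
    linarith [this.1, this.2]
  · intro i
    have h5 : L γ i = y i - fhat i := congrFun hγeq i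
    rw [← h5]
    simp [hL, Matrix.mulVecLin, Matrix.mulVec_transpose]

/-- The easy direction: a dual certificate implies minimality. -/
lemma tf_of_certificate {m n : ℕ} (D : Matrix (Fin m) (Fin n) ℝ) (y : Fin n → ℝ)
    (lam : ℝ) (hlam : 0 ≤ lam) (fhat : Fin n → ℝ)
    (γ : Fin m → ℝ) (h1 : ∀ i, |γ i| ≤ 1)
    (h2 : ∀ i, 0 < D.mulVec fhat i → γ i = 1)
    (h3 : ∀ i, D.mulVec fhat i < 0 → γ i = -1)
    (h4 : ∀ i, y i - fhat i = lam * Dᵀ.mulVec γ i)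
    (f : Fin n → ℝ) : tfObj D y lam fhat ≤ tfObj D y lam f := by
  set b := D.mulVec fhat with hb
  set Df := D.mulVec f with hDf
  -- quadratic expansion
  have ha : ∑ i, (y i - f i) ^ 2 =
      ∑ i, (y i - fhat i) ^ 2 - 2 * ∑ i, (y i - fhat i) * (f i - fhat i)
        + ∑ i, (f i - fhat i) ^ 2 := by
    rw [Finset.sum_congr rfl (fun i (_ : i ∈ Finset.univ) =>
      (by ring : (y i - f i) ^ 2 = (y i - fhat i) ^ 2
        - 2 * ((y i - fhat i) * (f i - fhat i)) + (f i - fhat i) ^ 2))]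
    rw [Finset.sum_add_distrib, Finset.sum_sub_distrib, ← Finset.mul_sum]
  have hP : ∑ i, (y i - fhat i) * (f i - fhat i)
      = lam * ∑ j, γ j * Df j - lam * ∑ j, γ j * b j := by
    calc ∑ i, (y i - fhat i) * (f i - fhat i)
        = lam * ∑ i, Dᵀ.mulVec γ i * (f i - fhat i) := by
          rw [Finset.mul_sum]
          exact Finset.sum_congr rfl fun i _ => by rw [h4 i]; ring
      _ = lam * ∑ j, γ j * D.mulVec (f - fhat) j := by
          congr 1
          rw [← dot_trans D γ (f - fhat)]
          exact Finset.sum_congr rfl fun i _ => by simp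
      _ = lam * ∑ j, (γ j * Df j - γ j * b j) := by
          congr 1
          exact Finset.sum_congr rfl fun j _ => by
            rw [Matrix.mulVec_sub]; simp [hDf, hb]; ring
      _ = lam * ∑ j, γ j * Df j - lam * ∑ j, γ j * b j := by
          rw [Finset.sum_sub_distrib]; ring
  have hSb : ∑ j, γ j * b j = ∑ j, |b j| := by
    refine Finset.sum_congr rfl fun j _ => ?_
    rcases lt_trichotomy (b j) 0 with h | h | h
    · rw [h3 j h, abs_of_neg h]; ring
    · simp [h]
    · rw [h2 j h, abs_of_pos h]; ring
  have hR : ∑ j, γ j * Df j ≤ ∑ j, |Df j| := by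
    refine Finset.sum_le_sum fun j _ => ?_
    calc γ j * Df j ≤ |γ j * Df j| := le_abs_self _
      _ = |γ j| * |Df j| := abs_mul _ _
      _ ≤ 1 * |Df j| := by
          exact mul_le_mul_of_nonneg_right (h1 j) (abs_nonneg _)
      _ = |Df j| := one_mul _
  have hQ : (0:ℝ) ≤ ∑ i, (f i - fhat i) ^ 2 :=
    Finset.sum_nonneg fun i _ => sq_nonneg _
  have hlr := mul_nonneg hlam (sub_nonneg.2 hR)
  unfold tfObj
  rw [ha]
  rw [← hb, ← hDf]
  nlinarith [hP, hSb, hQ, hlr]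

/-- KKT (subgradient) characterization of the trend filtering solution: `f̂` minimizes the
objective iff there is a subgradient `γ` of the `ℓ₁` norm at `Df̂` with
`y − f̂ = λ Dᵀγ`. -/
theorem stmt6 {m n : ℕ} (D : Matrix (Fin m) (Fin n) ℝ) (y : Fin n → ℝ)
    (lam : ℝ) (hlam : 0 ≤ lam) (fhat : Fin n → ℝ) :
    (∀ f : Fin n → ℝ, tfObj D y lam fhat ≤ tfObj D y lam f) ↔
      ∃ γ : Fin m → ℝ, (∀ i, |γ i| ≤ 1) ∧
        (∀ i, 0 < D.mulVec fhat i → γ i = 1) ∧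
        (∀ i, D.mulVec fhat i < 0 → γ i = -1) ∧
        (∀ i, y i - fhat i = lam * Dᵀ.mulVec γ i) := by
  constructor
  · intro hmin
    exact tf_certificate D y lam fhat (tf_dir_ineq D y lam fhat hmin)
  · rintro ⟨γ, h1, h2, h3, h4⟩ f
    exact tf_of_certificate D y lam hlam fhat γ h1 h2 h3 h4 f
end

section
/- Let d ≥ 1 and n ≥ 2d, and let D = D^{(d)} be the d-th order difference matrix of size (n−d)×n. Then for all row indices i, j ∈ {1,…,n−d}: [D Dᵀ]_{i,j} = (−1)^{|i−j|} · binomial(2d, d + |i−j|) if |i − j| ≤ d, and [D Dᵀ]_{i,j} = 0 if |i − j| > d. In particular, D Dᵀ is a symmetric banded Toeplitz matrix of bandwidth d. -/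
open Matrix BigOperators

lemma key_sum (d m : ℕ) (hm : m ≤ d) :
    ∑ s ∈ Finset.range (d - m + 1), d.choose (m + s) * d.choose s
      = (2 * d).choose (d + m) := by
  have h1 : (2 * d).choose (d + m) = (2 * d).choose (d - m) := by
    have := Nat.choose_symm (n := 2 * d) (k := d + m) (by omega)
    rw [← this]; congr 1; omega
  rw [h1, two_mul, Nat.add_choose_eq,
    Finset.Nat.sum_antidiagonal_eq_sum_range_succ_mk]
  apply Finset.sum_congr rfl
  intro s hs
  simp only [Finset.mem_range] at hs
  have h2 : d.choose (d - m - s) = d.choose (m + s) := by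
    have := Nat.choose_symm (n := d) (k := m + s) (by omega)
    rw [← this]; congr 1; omega
  rw [h2, Nat.mul_comm]

lemma entry_le (d n : ℕ) (hn : 2 * d ≤ n) (i j : Fin (n - d)) (hij : (i : ℕ) ≤ (j : ℕ)) :
    (diffMatrix d n * (diffMatrix d n)ᵀ) i j =
      if (j : ℕ) - (i : ℕ) ≤ d then
        (-1 : ℝ) ^ ((j : ℕ) - (i : ℕ)) * (Nat.choose (2 * d) (d + ((j : ℕ) - (i : ℕ))))
      else 0 := by
  set m := (j : ℕ) - (i : ℕ) with hm
  have hjm : (j : ℕ) = (i : ℕ) + m := by omega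
  have hjlt : (j : ℕ) < n - d := j.isLt
  have hidn : (i : ℕ) + d < n := by have := i.isLt; omega
  rw [Matrix.mul_apply]
  simp only [Matrix.transpose_apply]
  set F : ℕ → ℝ := fun k =>
    (if (i : ℕ) ≤ k ∧ k ≤ (i : ℕ) + d then
        (-1 : ℝ) ^ (d - (k - (i : ℕ))) * (Nat.choose d (k - (i : ℕ))) else 0) *
    (if (j : ℕ) ≤ k ∧ k ≤ (j : ℕ) + d then
        (-1 : ℝ) ^ (d - (k - (j : ℕ))) * (Nat.choose d (k - (j : ℕ))) else 0) with hF
  have hsum : ∑ k : Fin n, diffMatrix d n i k * diffMatrix d n j k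
      = ∑ k ∈ Finset.range n, F k := by
    rw [← Fin.sum_univ_eq_sum_range F n]
    apply Finset.sum_congr rfl
    intro k _
    rfl
  rw [hsum]
  by_cases hmd : m ≤ d
  · have hsub : ∑ k ∈ Finset.range n, F k
        = ∑ k ∈ (Finset.range (d - m + 1)).map
            ⟨fun s => (j : ℕ) + s, add_right_injective _⟩, F k := by
      apply (Finset.sum_subset ?_ ?_).symm
      · intro k hk
        simp only [Finset.mem_map, Finset.mem_range, Function.Embedding.coeFn_mk] at hk
        obtain ⟨s, hs, hks⟩ := hk
        simp only [Finset.mem_range]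
        omega
      · intro k hk1 hk2
        simp only [Finset.mem_map, Finset.mem_range, Function.Embedding.coeFn_mk,
          not_exists] at hk2
        have hnot : ¬((j : ℕ) ≤ k ∧ k ≤ (i : ℕ) + d) := by
          intro ⟨h1, h2⟩
          exact hk2 (k - (j : ℕ)) ⟨by omega, by omega⟩
        rw [hF]
        simp only
        by_cases h1 : (j : ℕ) ≤ k ∧ k ≤ (j : ℕ) + d
        · rw [if_neg (show ¬((i : ℕ) ≤ k ∧ k ≤ (i : ℕ) + d) by omega), zero_mul]
        · rw [if_neg h1, mul_zero]
    rw [hsub, Finset.sum_map]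
    simp only [Function.Embedding.coeFn_mk]
    have hterm : ∀ s ∈ Finset.range (d - m + 1),
        F ((j : ℕ) + s) = (-1 : ℝ) ^ m * ((d.choose (m + s) * d.choose s : ℕ) : ℝ) := by
      intro s hs
      simp only [Finset.mem_range] at hs
      rw [hF]
      simp only
      rw [if_pos (by omega), if_pos (by omega)]
      have e1 : (j : ℕ) + s - (i : ℕ) = m + s := by omega
      have e2 : (j : ℕ) + s - (j : ℕ) = s := by omega
      rw [e1, e2]
      have hsign : (-1 : ℝ) ^ (d - (m + s)) * (-1 : ℝ) ^ (d - s) = (-1 : ℝ) ^ m := by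
        rw [← pow_add]
        have heven : Even ((d - (m + s)) + (d - s) + m) := by
          have : (d - (m + s)) + (d - s) + m = 2 * (d - s) := by omega
          rw [this]; exact even_two_mul _
        have hone : ((-1 : ℝ)) ^ ((d - (m + s)) + (d - s) + m) = 1 :=
          Even.neg_one_pow heven
        rw [pow_add] at hone
        have h2 : ((-1 : ℝ) ^ m) * ((-1 : ℝ) ^ m) = 1 := by
          rw [← pow_add]; exact Even.neg_one_pow (Even.add_self m)
        calc (-1 : ℝ) ^ (d - (m + s) + (d - s))
            = (-1 : ℝ) ^ (d - (m + s) + (d - s)) * (((-1 : ℝ) ^ m) * ((-1 : ℝ) ^ m)) := by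
              rw [h2, mul_one]
          _ = ((-1 : ℝ) ^ (d - (m + s) + (d - s)) * (-1 : ℝ) ^ m) * (-1 : ℝ) ^ m := by ring
          _ = (-1 : ℝ) ^ m := by rw [hone, one_mul]
      push_cast
      calc (-1:ℝ) ^ (d - (m + s)) * (d.choose (m+s) : ℝ) *
            ((-1:ℝ) ^ (d - s) * (d.choose s : ℝ))
          = ((-1:ℝ) ^ (d - (m + s)) * (-1:ℝ) ^ (d - s)) *
            ((d.choose (m+s) : ℝ) * (d.choose s : ℝ)) := by ring
        _ = (-1:ℝ) ^ m * ((d.choose (m+s) : ℝ) * (d.choose s : ℝ)) := by rw [hsign]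
    rw [Finset.sum_congr rfl hterm, ← Finset.mul_sum, ← Nat.cast_sum, key_sum d m hmd,
      if_pos hmd]
  · rw [if_neg hmd]
    apply Finset.sum_eq_zero
    intro k _
    rw [hF]
    simp only
    by_cases h1 : (j : ℕ) ≤ k ∧ k ≤ (j : ℕ) + d
    · rw [if_neg (show ¬((i : ℕ) ≤ k ∧ k ≤ (i : ℕ) + d) by omega), zero_mul]
    · rw [if_neg h1, mul_zero]

/-- Entries of `D D^T` for the `d`-th order difference matrix: a symmetric banded
Toeplitz matrix of bandwidth `d` with entries `(-1)^{|i-j|} * choose (2d) (d + |i-j|)`. -/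
theorem stmt8 (d n : ℕ) (hd : 1 ≤ d) (hn : 2 * d ≤ n) :
    (∀ i j : Fin (n - d),
      (diffMatrix d n * (diffMatrix d n)ᵀ) i j =
        if (((i : ℕ) : ℤ) - ((j : ℕ) : ℤ)).natAbs ≤ d then
          (-1 : ℝ) ^ ((((i : ℕ) : ℤ) - ((j : ℕ) : ℤ)).natAbs) *
            (Nat.choose (2 * d) (d + (((i : ℕ) : ℤ) - ((j : ℕ) : ℤ)).natAbs))
        else 0) ∧
    (diffMatrix d n * (diffMatrix d n)ᵀ).IsSymm := by
  have hsymm : (diffMatrix d n * (diffMatrix d n)ᵀ).IsSymm := by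
    rw [Matrix.IsSymm, Matrix.transpose_mul, Matrix.transpose_transpose]
  refine ⟨?_, hsymm⟩
  intro i j
  rcases le_or_gt (i : ℕ) (j : ℕ) with hij | hij
  · have habs : (((i : ℕ) : ℤ) - ((j : ℕ) : ℤ)).natAbs = (j : ℕ) - (i : ℕ) := by omega
    rw [habs]
    exact entry_le d n hn i j hij
  · have habs : (((i : ℕ) : ℤ) - ((j : ℕ) : ℤ)).natAbs = (i : ℕ) - (j : ℕ) := by omega
    rw [habs]
    have := hsymm.apply i j
    rw [← this]
    exact entry_le d n hn j i (le_of_lt hij)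
end

section
/- Let d ≥ 1, n > d, and let D = D^{(d)} be the d-th order difference matrix. Let X be the n×d real matrix with entries X_{i,k} = i^{k} for i = 1,…,n and k = 0,1,…,d−1. Then XᵀX is invertible and I_n − Dᵀ (D Dᵀ)⁻¹ D = X (XᵀX)⁻¹ Xᵀ; that is, the orthogonal projection of ℝⁿ onto the orthogonal complement of the row space of D equals the hat matrix of least squares polynomial regression of degree d − 1 on the design points 1,…,n. -/
open Matrix BigOperators

/-- The polynomial-regression design matrix on the points `1, …, n`:
`X_{i,k} = i^k` for `i = 1, …, n` and `k = 0, …, d-1`. -/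
noncomputable def designMatrix (n d : ℕ) : Matrix (Fin n) (Fin d) ℝ := fun i k =>
  (((i : ℕ) : ℝ) + 1) ^ (k : ℕ)

open Polynomial Finset in
lemma diff_annihilates : ∀ (d : ℕ) (p : ℝ[X]), p.natDegree < d → ∀ x : ℝ,
    ∑ t ∈ Finset.range (d+1), (-1:ℝ)^t * (d.choose t) * p.eval (x + t) = 0 := by
  intro d
  induction d with
  | zero => intro p hp; omega
  | succ d ih =>
    intro p hp x
    set q : ℝ[X] := p.comp (X + C 1) - p with hqdef
    have hqeval : ∀ y : ℝ, q.eval y = p.eval (y + 1) - p.eval y := by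
      intro y; simp [hqdef, eval_comp]
    have hA : ∀ y : ℝ,
        (∑ t ∈ Finset.range (d+2), (-1:ℝ)^t * ((d+1).choose t) * p.eval (y + t))
        = - ∑ t ∈ Finset.range (d+1), (-1:ℝ)^t * (d.choose t) * q.eval (y + t) := by
      intro y
      have e1 : ∑ t ∈ Finset.range (d+2), (-1:ℝ)^t * ((d+1).choose t) * p.eval (y + t)
          = (∑ i ∈ Finset.range (d+1), (-1:ℝ)^(i+1) * ((d+1).choose (i+1)) * p.eval (y + i + 1))
            + p.eval y := by
        rw [Finset.sum_range_succ']
        simp only [Nat.cast_add, Nat.cast_one, Nat.cast_zero, Nat.choose_zero_right, pow_zero,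
          one_mul, add_zero, ← add_assoc]
      have e2 : ∀ i, ((d+1).choose (i+1) : ℝ) = (d.choose i : ℝ) + (d.choose (i+1) : ℝ) := by
        intro i; rw [Nat.choose_succ_succ]; push_cast; ring
      have e3 : ∑ i ∈ Finset.range (d+1), (-1:ℝ)^(i+1) * (d.choose (i+1)) * p.eval (y + i + 1)
          = (∑ t ∈ Finset.range (d+1), (-1:ℝ)^t * (d.choose t) * p.eval (y + t)) - p.eval y := by
        have h5 := Finset.sum_range_succ' (fun t => (-1:ℝ)^t * (d.choose t) * p.eval (y + t)) (d+1)
        have e4 : ∑ t ∈ Finset.range (d+2), (-1:ℝ)^t * (d.choose t) * p.eval (y + t)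
            = ∑ t ∈ Finset.range (d+1), (-1:ℝ)^t * (d.choose t) * p.eval (y + t) := by
          rw [Finset.sum_range_succ, Nat.choose_succ_self]
          push_cast; ring
        rw [e4] at h5
        simp only [Nat.cast_add, Nat.cast_one, Nat.cast_zero, Nat.choose_zero_right, pow_zero,
          one_mul, add_zero, ← add_assoc] at h5
        linarith [h5]
      have split : ∑ t ∈ Finset.range (d+1), (-1:ℝ)^t * (d.choose t) * q.eval (y + t)
          = (∑ t ∈ Finset.range (d+1), (-1:ℝ)^t * (d.choose t) * p.eval (y + t + 1))
            - ∑ t ∈ Finset.range (d+1), (-1:ℝ)^t * (d.choose t) * p.eval (y + t) := by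
        rw [← Finset.sum_sub_distrib]
        apply Finset.sum_congr rfl; intro i _
        rw [hqeval]; ring
      have flip : ∑ i ∈ Finset.range (d+1), (-1:ℝ)^(i+1) * ((d+1).choose (i+1)) * p.eval (y + i + 1)
          = (∑ i ∈ Finset.range (d+1), (-1:ℝ)^(i+1) * (d.choose i) * p.eval (y + i + 1))
            + ∑ i ∈ Finset.range (d+1), (-1:ℝ)^(i+1) * (d.choose (i+1)) * p.eval (y + i + 1) := by
        rw [← Finset.sum_add_distrib]
        apply Finset.sum_congr rfl; intro i _
        rw [e2]; ring
      have flip2 : ∑ i ∈ Finset.range (d+1), (-1:ℝ)^(i+1) * (d.choose i) * p.eval (y + i + 1)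
          = - ∑ i ∈ Finset.range (d+1), (-1:ℝ)^i * (d.choose i) * p.eval (y + i + 1) := by
        rw [← Finset.sum_neg_distrib]
        apply Finset.sum_congr rfl; intro i _; ring
      rw [e1, flip, flip2, e3, split]
      ring
    rw [hA x]
    by_cases hp0 : p.natDegree = 0
    · obtain ⟨c, rfl⟩ := Polynomial.natDegree_eq_zero.mp hp0
      simp [hqdef]
    · have hq : q.natDegree < d := by
        have hpne : p ≠ 0 := fun h => hp0 (by simp [h])
        have hcomp_lc : (p.comp (X + C 1)).leadingCoeff = p.leadingCoeff := by
          rw [Polynomial.leadingCoeff_comp (by rw [natDegree_X_add_C]; exact one_ne_zero)]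
          rw [Polynomial.leadingCoeff_X_add_C, one_pow, mul_one]
        have hcomp_ne : p.comp (X + C 1) ≠ 0 := by
          intro h
          apply hpne
          have h2 := hcomp_lc
          rw [h] at h2
          simp only [Polynomial.leadingCoeff_zero] at h2
          exact Polynomial.leadingCoeff_eq_zero.mp h2.symm
        have hdegeq : (p.comp (X + C 1)).degree = p.degree := by
          rw [Polynomial.degree_eq_natDegree hcomp_ne, Polynomial.degree_eq_natDegree hpne]
          norm_cast
          rw [Polynomial.natDegree_comp, natDegree_X_add_C, mul_one]
        have hdlt : q.degree < p.degree := by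
          have := Polynomial.degree_sub_lt hdegeq hcomp_ne hcomp_lc
          rwa [hdegeq] at this
        have hple : 1 ≤ p.natDegree := Nat.pos_of_ne_zero hp0
        by_cases hq0 : q = 0
        · rw [hq0]; simp only [Polynomial.natDegree_zero]; omega
        · have := Polynomial.natDegree_lt_natDegree hq0 hdlt
          omega
      have := ih q hq x
      rw [this, neg_zero]

open Polynomial Finset in
lemma DX_zero (d n : ℕ) (hdn : d < n) : diffMatrix d n * designMatrix n d = 0 := by
  ext i k
  have hin : (i : ℕ) + d < n := by omega
  -- g m : the entry as a function of the natural number column index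
  set g : ℕ → ℝ := fun m =>
    (if (i : ℕ) ≤ m ∧ m ≤ (i : ℕ) + d then
      (-1 : ℝ) ^ (d - (m - (i : ℕ))) * (Nat.choose d (m - (i : ℕ))) else 0) * ((m : ℝ) + 1) ^ (k : ℕ)
    with hg
  have h1 : (diffMatrix d n * designMatrix n d) i k = ∑ m ∈ Finset.range n, g m := by
    rw [Matrix.mul_apply, ← Fin.sum_univ_eq_sum_range]
    rfl
  rw [h1]
  have emb : Function.Injective (fun t => (i : ℕ) + t) := add_right_injective _
  have h2 : ∑ m ∈ Finset.range n, g m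
      = ∑ m ∈ (Finset.range (d+1)).map ⟨fun t => (i : ℕ) + t, emb⟩, g m := by
    apply (Finset.sum_subset ?_ ?_).symm
    · intro m hm
      simp only [Finset.mem_map, Finset.mem_range, Function.Embedding.coeFn_mk] at hm
      obtain ⟨t, ht, rfl⟩ := hm
      simp only [Finset.mem_range]; omega
    · intro m hm hnot
      simp only [Finset.mem_map, Finset.mem_range, Function.Embedding.coeFn_mk] at hnot
      have : ¬((i : ℕ) ≤ m ∧ m ≤ (i : ℕ) + d) := by
        intro ⟨h3, h4⟩
        exact hnot ⟨m - (i:ℕ), by omega, by omega⟩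
      rw [hg]
      simp only [this, if_false, zero_mul]
  rw [h2, Finset.sum_map]
  simp only [Function.Embedding.coeFn_mk]
  have h3 : ∀ t ∈ Finset.range (d+1),
      g ((i:ℕ) + t) = (-1:ℝ)^d * ((-1:ℝ)^t * (d.choose t) * ((X : ℝ[X])^(k:ℕ)).eval ((((i:ℕ):ℝ) + 1) + t)) := by
    intro t ht
    simp only [Finset.mem_range] at ht
    have hc : (i : ℕ) ≤ (i:ℕ) + t ∧ (i:ℕ) + t ≤ (i:ℕ) + d := ⟨by omega, by omega⟩
    have hsub : (i:ℕ) + t - (i:ℕ) = t := by omega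
    have hsign : (-1:ℝ) ^ (d - t) = (-1:ℝ)^d * (-1:ℝ)^t := by
      have h4 : (-1:ℝ)^(d-t) * (-1:ℝ)^t = (-1:ℝ)^d := by
        rw [← pow_add]; congr 1; omega
      have h5 : (-1:ℝ)^t * (-1:ℝ)^t = 1 := by
        rw [← pow_add, ← two_mul, pow_mul]; norm_num
      calc (-1:ℝ)^(d-t) = (-1:ℝ)^(d-t) * ((-1:ℝ)^t * (-1:ℝ)^t) := by rw [h5, mul_one]
        _ = (-1:ℝ)^d * (-1:ℝ)^t := by rw [← mul_assoc, h4]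
    rw [hg]
    simp only [hc, and_self, if_true, hsub, eval_pow, eval_X]
    push_cast
    rw [hsign]
    ring
  rw [Finset.sum_congr rfl h3, ← Finset.mul_sum,
    diff_annihilates d ((X : ℝ[X])^(k:ℕ)) (by simp) ((((i:ℕ):ℝ) + 1))]
  simp

-- v ⬝ v = 0 → v = 0
lemma dot_self_zero {m : Type*} [Fintype m] {v : m → ℝ} (h : v ⬝ᵥ v = 0) : v = 0 := by
  funext i
  have h0 : ∀ j ∈ Finset.univ, (0:ℝ) ≤ v j * v j := fun j _ => mul_self_nonneg _
  have := (Finset.sum_eq_zero_iff_of_nonneg h0).mp h i (Finset.mem_univ i)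
  simpa using mul_self_eq_zero.mp this

lemma design_inj (d n : ℕ) (hdn : d < n) {v : Fin d → ℝ}
    (h : designMatrix n d *ᵥ v = 0) : v = 0 := by
  set V : Matrix (Fin d) (Fin d) ℝ := Matrix.vandermonde (fun i : Fin d => ((i : ℕ) : ℝ) + 1) with hV
  have hVdet : V.det ≠ 0 := by
    rw [hV, Matrix.det_vandermonde_ne_zero_iff]
    intro a b hab
    simp only at hab
    have : ((a:ℕ):ℝ) = ((b:ℕ):ℝ) := by linarith
    exact Fin.ext (Nat.cast_injective this)
  apply Matrix.eq_zero_of_mulVec_eq_zero hVdet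
  funext i
  have := congrFun h ⟨(i : ℕ), lt_of_lt_of_le i.isLt hdn.le⟩
  simpa [Matrix.mulVec, dotProduct, designMatrix, hV, Matrix.vandermonde] using this

lemma XtX_unit (d n : ℕ) (hdn : d < n) :
    IsUnit ((designMatrix n d)ᵀ * designMatrix n d).det := by
  rw [isUnit_iff_ne_zero]
  intro h0
  obtain ⟨v, hv, hmul⟩ := (Matrix.exists_mulVec_eq_zero_iff).mpr h0
  apply hv
  apply design_inj d n hdn
  apply dot_self_zero
  set w := designMatrix n d *ᵥ v with hw
  have key : v ⬝ᵥ (((designMatrix n d)ᵀ * designMatrix n d) *ᵥ v) = w ⬝ᵥ w := by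
    rw [← Matrix.mulVec_mulVec, Matrix.dotProduct_mulVec, Matrix.vecMul_transpose]
  rw [← key, hmul, dotProduct_zero]

lemma diffT_inj (d n : ℕ) (hd : 1 ≤ d) (hdn : d < n) {v : Fin (n - d) → ℝ}
    (h : (diffMatrix d n)ᵀ *ᵥ v = 0) : v = 0 := by
  have key : ∀ m : ℕ, ∀ hm : m < n - d, v ⟨m, hm⟩ = 0 := by
    intro m
    induction m using Nat.strong_induction_on with
    | _ m ih =>
      intro hm
      have hmn : m < n := by omega
      have hcol := congrFun h ⟨m, hmn⟩
      simp only [Matrix.mulVec, dotProduct, Matrix.transpose_apply, Pi.zero_apply] at hcol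
      rw [Finset.sum_eq_single (⟨m, hm⟩ : Fin (n - d))] at hcol
      · have : diffMatrix d n ⟨m, hm⟩ ⟨m, hmn⟩ = (-1:ℝ)^d := by
          simp [diffMatrix]
        rw [this] at hcol
        have hne : ((-1:ℝ)^d) ≠ 0 := by
          apply pow_ne_zero; norm_num
        exact (mul_eq_zero.mp hcol).resolve_left hne
      · intro b _ hb
        rcases lt_or_gt_of_ne (fun hbv : (b:ℕ) = m => hb (Fin.ext hbv)) with hlt | hgt
        · rw [ih b hlt b.isLt]
          · ring
        · have : diffMatrix d n b ⟨m, hmn⟩ = 0 := by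
            simp only [diffMatrix]
            rw [if_neg]; omega
          rw [this, zero_mul]
      · intro habs; exact absurd (Finset.mem_univ _) habs
  funext i
  have := key i i.isLt
  simpa using this

lemma DDt_unit (d n : ℕ) (hd : 1 ≤ d) (hdn : d < n) :
    IsUnit (diffMatrix d n * (diffMatrix d n)ᵀ).det := by
  rw [isUnit_iff_ne_zero]
  intro h0
  obtain ⟨v, hv, hmul⟩ := (Matrix.exists_mulVec_eq_zero_iff).mpr h0
  apply hv
  apply diffT_inj d n hd hdn (v := v)
  apply dot_self_zero
  set w := (diffMatrix d n)ᵀ *ᵥ v with hw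
  have key : v ⬝ᵥ ((diffMatrix d n * (diffMatrix d n)ᵀ) *ᵥ v) = w ⬝ᵥ w := by
    rw [← Matrix.mulVec_mulVec, Matrix.dotProduct_mulVec, ← Matrix.transpose_transpose (diffMatrix d n),
      Matrix.vecMul_transpose, Matrix.transpose_transpose]
  rw [← key, hmul, dotProduct_zero]

-- trace argument helper
lemma symm_idem_trace_zero {m : Type*} [Fintype m] [DecidableEq m] (M : Matrix m m ℝ)
    (hMT : Mᵀ = M) (hMM : M * M = M) (htr : Matrix.trace M = 0) : M = 0 := by
  have hM : M = Mᵀ * M := by rw [hMT, hMM]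
  have htr2 : Matrix.trace (Mᵀ * M) = ∑ j : m, ∑ i : m, M i j * M i j := by
    simp [Matrix.trace, Matrix.diag, Matrix.mul_apply]
  rw [hM] at htr
  rw [htr2] at htr
  have h0 : ∀ j ∈ Finset.univ, (0:ℝ) ≤ ∑ i : m, M i j * M i j := by
    intro j _
    exact Finset.sum_nonneg fun i _ => mul_self_nonneg _
  ext i j
  have h1 := (Finset.sum_eq_zero_iff_of_nonneg h0).mp htr j (Finset.mem_univ j)
  have h2 : ∀ i ∈ Finset.univ, (0:ℝ) ≤ M i j * M i j := fun i _ => mul_self_nonneg _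
  have h3 := (Finset.sum_eq_zero_iff_of_nonneg h2).mp h1 i (Finset.mem_univ i)
  simpa using mul_self_eq_zero.mp h3


/-- `XᵀX` is invertible and `I - Dᵀ(DDᵀ)⁻¹D = X(XᵀX)⁻¹Xᵀ`: the orthogonal projection onto
the orthogonal complement of the row space of `D = D^{(d)}` is the hat matrix of degree
`d-1` polynomial least squares regression on the design points `1, …, n`. -/
theorem stmt11 (d n : ℕ) (hd : 1 ≤ d) (hdn : d < n) :
    IsUnit ((designMatrix n d)ᵀ * designMatrix n d).det ∧
    (1 : Matrix (Fin n) (Fin n) ℝ) -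
        (diffMatrix d n)ᵀ * (diffMatrix d n * (diffMatrix d n)ᵀ)⁻¹ * diffMatrix d n =
      designMatrix n d * ((designMatrix n d)ᵀ * designMatrix n d)⁻¹ * (designMatrix n d)ᵀ := by
  have hB := XtX_unit d n hdn
  refine ⟨hB, ?_⟩
  set D := diffMatrix d n with hDdef
  set X := designMatrix n d with hXdef
  set A := D * Dᵀ with hAdef
  set B := Xᵀ * X with hBdef
  have hA : IsUnit A.det := DDt_unit d n hd hdn
  have hDX : D * X = 0 := DX_zero d n hdn
  have hXD : Xᵀ * Dᵀ = 0 := by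
    rw [← Matrix.transpose_mul, hDX, Matrix.transpose_zero]
  have hDXt : D * (X * (B⁻¹ * Xᵀ)) = 0 := by rw [← Matrix.mul_assoc, ← Matrix.mul_assoc, hDX, Matrix.zero_mul, Matrix.zero_mul]
  set P := X * B⁻¹ * Xᵀ with hPdef
  set Q := Dᵀ * A⁻¹ * D with hQdef
  have hBB : B⁻¹ * B = 1 := Matrix.nonsing_inv_mul B hB
  have hAA : A⁻¹ * A = 1 := Matrix.nonsing_inv_mul A hA
  have hBB' : B * B⁻¹ = 1 := Matrix.mul_nonsing_inv B hB
  have hAA' : A * A⁻¹ = 1 := Matrix.mul_nonsing_inv A hA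
  have hPP : P * P = P := by
    calc P * P = X * ((B⁻¹ * B) * (B⁻¹ * Xᵀ)) := by
          rw [hPdef, hBdef]; simp only [Matrix.mul_assoc]
      _ = P := by rw [hBB, Matrix.one_mul, hPdef, Matrix.mul_assoc]
  have hQQ : Q * Q = Q := by
    calc Q * Q = Dᵀ * ((A⁻¹ * A) * (A⁻¹ * D)) := by
          rw [hQdef, hAdef]; simp only [Matrix.mul_assoc]
      _ = Q := by rw [hAA, Matrix.one_mul, hQdef, Matrix.mul_assoc]
  have hPQ : P * Q = 0 := by
    calc P * Q = X * B⁻¹ * (Xᵀ * Dᵀ) * (A⁻¹ * D) := by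
          rw [hPdef, hQdef]; simp only [Matrix.mul_assoc]
      _ = 0 := by rw [hXD, Matrix.mul_zero, Matrix.zero_mul]
  have hQP : Q * P = 0 := by
    calc Q * P = Dᵀ * A⁻¹ * (D * X) * (B⁻¹ * Xᵀ) := by
          rw [hPdef, hQdef]; simp only [Matrix.mul_assoc]
      _ = 0 := by rw [hDX, Matrix.mul_zero, Matrix.zero_mul]
  have hBT : Bᵀ = B := by rw [hBdef, Matrix.transpose_mul, Matrix.transpose_transpose]
  have hAT : Aᵀ = A := by rw [hAdef, Matrix.transpose_mul, Matrix.transpose_transpose]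
  have hPT : Pᵀ = P := by
    rw [hPdef, Matrix.transpose_mul, Matrix.transpose_mul, Matrix.transpose_transpose,
      Matrix.transpose_nonsing_inv, hBT, Matrix.mul_assoc]
  have hQT : Qᵀ = Q := by
    rw [hQdef, Matrix.transpose_mul, Matrix.transpose_mul, Matrix.transpose_transpose,
      Matrix.transpose_nonsing_inv, hAT, Matrix.mul_assoc]
  set M := (1 : Matrix (Fin n) (Fin n) ℝ) - P - Q with hMdef
  have hMT : Mᵀ = M := by
    rw [hMdef, Matrix.transpose_sub, Matrix.transpose_sub, Matrix.transpose_one, hPT, hQT]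
  have hMM : M * M = M := by
    rw [hMdef]
    simp only [Matrix.sub_mul, Matrix.mul_sub, Matrix.one_mul, Matrix.mul_one,
      hPP, hQQ, hPQ, hQP]
    abel
  have htrP : Matrix.trace P = (d : ℝ) := by
    rw [hPdef, Matrix.trace_mul_comm (X * B⁻¹) Xᵀ, ← Matrix.mul_assoc, ← hBdef, hBB',
      Matrix.trace_one]
    simp
  have htrQ : Matrix.trace Q = ((n - d : ℕ) : ℝ) := by
    rw [hQdef, Matrix.trace_mul_comm (Dᵀ * A⁻¹) D, ← Matrix.mul_assoc, ← hAdef, hAA',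
      Matrix.trace_one]
    simp
  have htrM : Matrix.trace M = 0 := by
    rw [hMdef, Matrix.trace_sub, Matrix.trace_sub, Matrix.trace_one, htrP, htrQ]
    have : ((n - d : ℕ) : ℝ) = (n : ℝ) - (d : ℝ) := by
      rw [Nat.cast_sub hdn.le]
    rw [this]
    simp
  have hM0 : M = 0 := symm_idem_trace_zero M hMT hMM htrM
  have : (1 : Matrix (Fin n) (Fin n) ℝ) - Q = P := by
    have h := hM0
    rw [hMdef] at h
    calc (1 : Matrix (Fin n) (Fin n) ℝ) - Q = (1 - P - Q) + P := by abel
      _ = P := by rw [h, zero_add]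
  exact this
end

section
/- Let n ≥ 2 and let D = D^{(1)} be the (n−1)×n first-order difference matrix. Then for every y ∈ ℝⁿ and every t ∈ {1,…,n−1}: [(D Dᵀ)⁻¹ D y]_t = (t/n) Σ_{k=1}^{n} y_k − Σ_{k=1}^{t} y_k; equivalently, [(D Dᵀ)⁻¹ D y]_t = − Σ_{k=1}^{t} (y_k − ȳ) where ȳ = n⁻¹ Σ_{k=1}^{n} y_k, so the dual vector of first-order trend filtering is, up to sign, the CUSUM process of y. -/
open Matrix BigOperators

lemma sum_if_eq {m : ℕ} (f : Fin m → ℝ) (c : ℕ) :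
    ∑ i : Fin m, (if c = (i : ℕ) then f i else 0) = if h : c < m then f ⟨c, h⟩ else 0 := by
  by_cases h : c < m
  · rw [dif_pos h]
    rw [Finset.sum_eq_single (⟨c, h⟩ : Fin m)]
    · simp
    · intro b _ hb
      rw [if_neg]
      intro hc
      exact hb (Fin.ext hc.symm)
    · intro habs
      exact absurd (Finset.mem_univ _) habs
  · rw [dif_neg h]
    apply Finset.sum_eq_zero
    intro i _
    rw [if_neg]
    intro hc
    exact h (hc ▸ i.2)

lemma diff_apply (n : ℕ) (i : Fin (n - 1)) (j : Fin n) :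
    diffMatrix 1 n i j =
      (if (j : ℕ) = (i : ℕ) then (-1 : ℝ) else 0) +
        (if (j : ℕ) = (i : ℕ) + 1 then (1 : ℝ) else 0) := by
  unfold diffMatrix
  by_cases h0 : (j : ℕ) = (i : ℕ)
  · have : (i : ℕ) ≤ (j : ℕ) ∧ (j : ℕ) ≤ (i : ℕ) + 1 := by omega
    rw [if_pos this, if_pos h0, if_neg (by omega)]
    simp [h0]
  · by_cases h1 : (j : ℕ) = (i : ℕ) + 1
    · have : (i : ℕ) ≤ (j : ℕ) ∧ (j : ℕ) ≤ (i : ℕ) + 1 := by omega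
      rw [if_pos this, if_neg h0, if_pos h1]
      simp [h1]
    · rw [if_neg (by omega), if_neg h0, if_neg h1]
      simp

/-- `(D x)_i = x_{i+1} - x_i`. -/
lemma D_mulVec (n : ℕ) (x : Fin n → ℝ) (i : Fin (n - 1)) :
    (diffMatrix 1 n).mulVec x i =
      x ⟨(i : ℕ) + 1, by have := i.2; omega⟩ - x ⟨(i : ℕ), by have := i.2; omega⟩ := by
  unfold Matrix.mulVec dotProduct
  have key : ∀ j : Fin n, diffMatrix 1 n i j * x j =
      (if (i : ℕ) + 1 = (j : ℕ) then x j else 0) + -(if (i : ℕ) = (j : ℕ) then x j else 0) := by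
    intro j
    have hj := j.2
    rw [diff_apply]
    split_ifs <;> (first | ring1 | omega)
  rw [Finset.sum_congr rfl (fun j _ => key j), Finset.sum_add_distrib, Finset.sum_neg_distrib,
    sum_if_eq, sum_if_eq, dif_pos (show (i : ℕ) + 1 < n by have := i.2; omega),
    dif_pos (show (i : ℕ) < n by have := i.2; omega)]
  ring

/-- `(Dᵀ v)_j = v_{j-1} - v_j` with out-of-range entries read as `0`. -/
lemma Dt_mulVec (n : ℕ) (v : Fin (n - 1) → ℝ) (j : Fin n) :
    (diffMatrix 1 n)ᵀ.mulVec v j =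
      (if h : 0 < (j : ℕ) ∧ (j : ℕ) - 1 < n - 1 then v ⟨(j : ℕ) - 1, h.2⟩ else 0) -
        (if h : (j : ℕ) < n - 1 then v ⟨(j : ℕ), h⟩ else 0) := by
  unfold Matrix.mulVec dotProduct
  have key : ∀ i : Fin (n - 1), (diffMatrix 1 n)ᵀ j i * v i =
      (if (j : ℕ) - 1 = (i : ℕ) then (if 0 < (j : ℕ) then v i else 0) else 0)
        + -(if (j : ℕ) = (i : ℕ) then v i else 0) := by
    intro i
    have hi := i.2
    have hj := j.2
    rw [Matrix.transpose_apply, diff_apply]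
    split_ifs <;> (first | ring1 | omega)
  rw [Finset.sum_congr rfl (fun i _ => key i), Finset.sum_add_distrib, Finset.sum_neg_distrib,
    sum_if_eq (fun i => if 0 < (j : ℕ) then v i else 0), sum_if_eq]
  have hj := j.2
  split_ifs <;> (first | ring1 | omega)

/-- `Dᵀ` has trivial kernel. -/
lemma Dt_mulVec_injective (n : ℕ) (x : Fin (n - 1) → ℝ)
    (hx : (diffMatrix 1 n)ᵀ.mulVec x = 0) : x = 0 := by
  have key : ∀ m : ℕ, ∀ hm : m < n - 1, x ⟨m, hm⟩ = 0 := by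
    intro m
    induction m with
    | zero =>
      intro hm
      have h0 := congrFun hx ⟨0, by omega⟩
      rw [Dt_mulVec] at h0
      rw [dif_neg (by simp), dif_pos (by simpa using hm)] at h0
      simpa using h0
    | succ k ih =>
      intro hm
      have h0 := congrFun hx ⟨k + 1, by omega⟩
      rw [Dt_mulVec] at h0
      rw [dif_pos (by constructor <;> simp <;> omega), dif_pos (by simpa using hm)] at h0
      simp only [Pi.zero_apply, sub_eq_zero] at h0
      have := ih (by omega)
      simp only [Nat.add_sub_cancel] at h0
      rw [← h0]
      convert this using 2
  funext i
  exact key i (by omega) ▸ by simp [Fin.eta]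

lemma DDt_posDef (n : ℕ) (hn : 2 ≤ n) :
    (diffMatrix 1 n * (diffMatrix 1 n)ᵀ).PosDef := by
  set D := diffMatrix 1 n with hD
  have herm : (D * Dᵀ).IsHermitian := by
    have h := Matrix.isHermitian_mul_conjTranspose_self D
    rwa [Matrix.conjTranspose_eq_transpose_of_trivial] at h
  refine Matrix.PosDef.of_dotProduct_mulVec_pos herm ?_
  intro x hx
  have hstar : star x = x := by
    funext i; simp
  have hkey : (star x) ⬝ᵥ (D * Dᵀ).mulVec x = (Dᵀ.mulVec x) ⬝ᵥ (Dᵀ.mulVec x) := by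
    rw [hstar, ← Matrix.mulVec_mulVec, Matrix.dotProduct_mulVec, Matrix.mulVec_transpose]
  rw [hkey]
  have hne : Dᵀ.mulVec x ≠ 0 := fun h => hx (Dt_mulVec_injective n x h)
  have h1 : (0:ℝ) ≤ (Dᵀ.mulVec x) ⬝ᵥ (Dᵀ.mulVec x) :=
    Finset.sum_nonneg fun i _ => mul_self_nonneg _
  have h2 : (Dᵀ.mulVec x) ⬝ᵥ (Dᵀ.mulVec x) ≠ 0 :=
    fun h => hne (dotProduct_self_eq_zero.mp h)
  exact lt_of_le_of_ne h1 (Ne.symm h2)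

noncomputable def partialSum (n : ℕ) (y : Fin n → ℝ) (m : ℕ) : ℝ :=
  ∑ k : Fin n, if (k : ℕ) ≤ m then y k else 0

lemma partialSum_zero (n : ℕ) (hn : 0 < n) (y : Fin n → ℝ) :
    partialSum n y 0 = y ⟨0, hn⟩ := by
  unfold partialSum
  have h : ∀ k : Fin n, (if (k : ℕ) ≤ 0 then y k else 0) = if (0 : ℕ) = (k : ℕ) then y k else 0 := by
    intro k; split_ifs <;> (first | rfl | omega)
  rw [Finset.sum_congr rfl (fun k _ => h k), sum_if_eq, dif_pos hn]

lemma partialSum_succ (n : ℕ) (y : Fin n → ℝ) (m : ℕ) :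
    partialSum n y (m + 1) =
      partialSum n y m + (if h : m + 1 < n then y ⟨m + 1, h⟩ else 0) := by
  unfold partialSum
  have h : ∀ k : Fin n, (if (k : ℕ) ≤ m + 1 then y k else 0) =
      (if (k : ℕ) ≤ m then y k else 0) + (if m + 1 = (k : ℕ) then y k else 0) := by
    intro k; split_ifs <;> (first | ring1 | omega)
  rw [Finset.sum_congr rfl (fun k _ => h k), Finset.sum_add_distrib, sum_if_eq]

lemma partialSum_full (n : ℕ) (y : Fin n → ℝ) (m : ℕ) (hm : n ≤ m + 1) :
    partialSum n y m = ∑ k : Fin n, y k := by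
  unfold partialSum
  refine Finset.sum_congr rfl fun k _ => ?_
  rw [if_pos (by have := k.2; omega)]

lemma partialSum_pred (n : ℕ) (y : Fin n → ℝ) (c : ℕ) (h0 : 0 < c) (h1 : c < n) :
    partialSum n y c = partialSum n y (c - 1) + y ⟨c, h1⟩ := by
  have h := partialSum_succ n y (c - 1)
  simp only [show c - 1 + 1 = c from by omega] at h
  rw [dif_pos h1] at h
  exact h

lemma sum_const_if (n m : ℕ) (hm : m < n) (c : ℝ) :
    ∑ k : Fin n, (if (k : ℕ) ≤ m then c else 0) = ((m : ℝ) + 1) * c := by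
  rw [Fin.sum_univ_eq_sum_range (fun i => if i ≤ m then c else 0) n, ← Finset.sum_filter]
  have h : (Finset.range n).filter (fun i => i ≤ m) = Finset.range (m + 1) := by
    ext a; simp only [Finset.mem_filter, Finset.mem_range]; omega
  rw [h, Finset.sum_const, Finset.card_range, nsmul_eq_mul]
  push_cast
  ring

/-- For the first-order difference matrix `D = D^{(1)}`, the dual vector `(DDᵀ)⁻¹Dy` is, up
to sign, the CUSUM process of `y`: its `t`-th coordinate (with `t : Fin (n-1)` representing
the 1-indexed time `t+1`) equals `((t+1)/n)·Σ_k y_k − Σ_{k ≤ t} y_k`, i.e. minus the partial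
sum of the centered observations. -/
theorem stmt13 (n : ℕ) (hn : 2 ≤ n) (y : Fin n → ℝ) (t : Fin (n - 1)) :
    ((((diffMatrix 1 n * (diffMatrix 1 n)ᵀ)⁻¹ * diffMatrix 1 n).mulVec y) t =
      (((t : ℕ) : ℝ) + 1) / (n : ℝ) * (∑ k : Fin n, y k) -
        ∑ k : Fin n, (if (k : ℕ) ≤ (t : ℕ) then y k else 0)) ∧
    ((((diffMatrix 1 n * (diffMatrix 1 n)ᵀ)⁻¹ * diffMatrix 1 n).mulVec y) t =
      - ∑ k : Fin n,
          (if (k : ℕ) ≤ (t : ℕ) then y k - (∑ j : Fin n, y j) / (n : ℝ) else 0)) := by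
  have hn0 : (n : ℝ) ≠ 0 := by positivity
  set D := diffMatrix 1 n with hDdef
  set S := ∑ k : Fin n, y k with hS
  set v : Fin (n - 1) → ℝ :=
    fun i => (((i : ℕ) : ℝ) + 1) / (n : ℝ) * S - partialSum n y (i : ℕ) with hv
  -- the key vector identity
  have hw : ∀ j : Fin n, Dᵀ.mulVec v j = y j - S / n := by
    intro j
    have hjlt := j.2
    rw [hDdef, Dt_mulVec]
    by_cases hj0 : (j : ℕ) = 0
    · rw [dif_neg (by omega), dif_pos (show (j : ℕ) < n - 1 by omega)]
      have hj : j = ⟨0, by omega⟩ := Fin.ext hj0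
      simp only [hv, hj0, partialSum_zero n (by omega) y, hj]
      push_cast
      field_simp
      ring
    · by_cases hj2 : (j : ℕ) < n - 1
      · rw [dif_pos ⟨by omega, by omega⟩, dif_pos hj2]
        have hps : partialSum n y (j : ℕ) = partialSum n y ((j : ℕ) - 1) + y j := by
          have h := partialSum_pred n y (j : ℕ) (by omega) hjlt
          rwa [show (⟨(j : ℕ), hjlt⟩ : Fin n) = j from Fin.ext rfl] at h
        have hc : (((j : ℕ) - 1 : ℕ) : ℝ) = ((j : ℕ) : ℝ) - 1 := by
          have := Nat.cast_sub (show 1 ≤ (j : ℕ) by omega) (R := ℝ)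
          simpa using this
        simp only [hv, hps, hc]
        ring
      · have hj : (j : ℕ) = n - 1 := by omega
        rw [dif_pos ⟨by omega, by omega⟩, dif_neg hj2]
        have hfull : partialSum n y ((j : ℕ)) = S := partialSum_full n y _ (by omega)
        have hps : partialSum n y ((j : ℕ) - 1) = S - y j := by
          have h := partialSum_pred n y (j : ℕ) (by omega) hjlt
          rw [show (⟨(j : ℕ), hjlt⟩ : Fin n) = j from Fin.ext rfl, hfull] at h
          linarith
        have hc : (((j : ℕ) - 1 : ℕ) : ℝ) = ((j : ℕ) : ℝ) - 1 := by
          have := Nat.cast_sub (show 1 ≤ (j : ℕ) by omega) (R := ℝ)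
          simpa using this
        have hcn : ((j : ℕ) : ℝ) = (n : ℝ) - 1 := by
          rw [hj]
          have := Nat.cast_sub (show 1 ≤ n by omega) (R := ℝ)
          simpa using this
        simp only [hv, hps, hc, hcn]
        field_simp
        ring
  have hDDt : (D * Dᵀ).mulVec v = D.mulVec y := by
    rw [← Matrix.mulVec_mulVec]
    funext i
    rw [hDdef, D_mulVec, D_mulVec, hw, hw]
    ring
  have hdet : IsUnit (D * Dᵀ).det :=
    isUnit_iff_ne_zero.mpr (ne_of_gt (DDt_posDef n hn).det_pos)
  have hmain : (((D * Dᵀ)⁻¹ * D).mulVec y) = v := by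
    rw [← Matrix.mulVec_mulVec, ← hDDt, Matrix.mulVec_mulVec,
      Matrix.nonsing_inv_mul _ hdet, Matrix.one_mulVec]
  have h1 : (((D * Dᵀ)⁻¹ * D).mulVec y) t =
      (((t : ℕ) : ℝ) + 1) / (n : ℝ) * S - ∑ k : Fin n, (if (k : ℕ) ≤ (t : ℕ) then y k else 0) := by
    rw [hmain]
    simp only [hv]
    rfl
  refine ⟨h1, ?_⟩
  rw [h1]
  have hsplit : ∑ k : Fin n, (if (k : ℕ) ≤ (t : ℕ) then y k - S / n else 0) =
      (∑ k : Fin n, (if (k : ℕ) ≤ (t : ℕ) then y k else 0)) - (((t : ℕ) : ℝ) + 1) * (S / n) := by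
    have h : ∀ k : Fin n, (if (k : ℕ) ≤ (t : ℕ) then y k - S / n else 0) =
        (if (k : ℕ) ≤ (t : ℕ) then y k else 0) - (if (k : ℕ) ≤ (t : ℕ) then S / n else 0) := by
      intro k; split_ifs <;> ring
    rw [Finset.sum_congr rfl (fun k _ => h k), Finset.sum_sub_distrib,
      sum_const_if n (t : ℕ) (by have := t.2; omega) (S / n)]
  rw [hsplit]
  ring
end

section
/- Fix r ≥ 0, let d = r + 1, r_b = ⌈d/2⌉ − 1 and r_a = ⌊d/2⌋ (so r_a + r_b + 1 = d). Let n > d, m = n − d, and let D = D^{(d)} be the d-th order difference matrix. Let τ₁ < τ₂ be integers with r_b + 1 ≤ τ₁, τ₁ + r_a + 1 < τ₂ − r_b, and τ₂ + r_a ≤ m. Let A = {τ₁ − r_b, …, τ₁ + r_a} ∪ {τ₂ − r_b, …, τ₂ + r_a}, let S = {1,…,m} \ A, let s ∈ {−1, +1}, and set v = s · Σ_{i ∈ A} (D_i)ᵀ ∈ ℝⁿ, where D_i is the i-th row of D. Then for every t ∈ S with τ₁ + r_a < t < τ₂ − r_b, the coordinate of (D_S D_Sᵀ)⁻¹ D_S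 v indexed by row t equals −s. -/
open Matrix BigOperators

/-- `r_a = ⌊(r+1)/2⌋`. -/
def ra (r : ℕ) : ℕ := (r + 1) / 2

/-- `r_b = ⌈(r+1)/2⌉ − 1`. -/
def rb (r : ℕ) : ℕ := (r + 2) / 2 - 1

section AuxLemmas
open Finset Polynomial

lemma sumIdent (N : ℕ) (f : ℕ → ℝ) :
    ∑ k ∈ Finset.range (N+2), (-1:ℝ)^k * ((N+1).choose k) * f k
      = ∑ k ∈ Finset.range (N+1), (-1:ℝ)^k * (N.choose k) * (f k - f (k+1)) := by
  have h2 : ∑ k ∈ Finset.range (N+2), (-1:ℝ)^k * (N.choose k) * f k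
      = (∑ k ∈ Finset.range (N+1), (-1:ℝ)^(k+1) * (N.choose (k+1)) * f (k+1)) + f 0 := by
    rw [Finset.sum_range_succ']; simp
  have h3 : ∑ k ∈ Finset.range (N+2), (-1:ℝ)^k * (N.choose k) * f k
      = (∑ k ∈ Finset.range (N+1), (-1:ℝ)^k * (N.choose k) * f k) := by
    rw [Finset.sum_range_succ, Nat.choose_succ_self]; simp
  rw [Finset.sum_range_succ']
  have : ∀ k, ((N+1).choose (k+1) : ℝ) = (N.choose k : ℝ) + (N.choose (k+1) : ℝ) := by
    intro k; rw [Nat.choose_succ_succ]; push_cast; ring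
  calc (∑ k ∈ Finset.range (N+1), (-1:ℝ)^(k+1) * ((N+1).choose (k+1)) * f (k+1))
        + (-1:ℝ)^0 * ((N+1).choose 0) * f 0
      = (∑ k ∈ Finset.range (N+1), ((-1:ℝ)^(k+1) * (N.choose k) * f (k+1)
          + (-1:ℝ)^(k+1) * (N.choose (k+1)) * f (k+1))) + f 0 := by
        simp only [this, Nat.choose_zero_right, pow_zero, Nat.cast_one, one_mul]
        congr 1
        apply Finset.sum_congr rfl; intro k _; ring
    _ = (∑ k ∈ Finset.range (N+1), (-1:ℝ)^(k+1) * (N.choose k) * f (k+1))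
          + ((∑ k ∈ Finset.range (N+1), (-1:ℝ)^(k+1) * (N.choose (k+1)) * f (k+1)) + f 0) := by
        rw [Finset.sum_add_distrib]; ring
    _ = (∑ k ∈ Finset.range (N+1), (-1:ℝ)^(k+1) * (N.choose k) * f (k+1))
          + (∑ k ∈ Finset.range (N+1), (-1:ℝ)^k * (N.choose k) * f k) := by
        rw [← h2, h3]
    _ = ∑ k ∈ Finset.range (N+1), (-1:ℝ)^k * (N.choose k) * (f k - f (k+1)) := by
        rw [← Finset.sum_add_distrib]; apply Finset.sum_congr rfl; intro k _; ring

lemma degQ (N : ℕ) (P : ℝ[X]) (h : P.degree < ((N+1 : ℕ) : WithBot ℕ)) :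
    (P.comp (X + C 1) - P).degree < ((N : ℕ) : WithBot ℕ) := by
  by_cases hP0 : P = 0
  · simp [hP0]
  by_cases hPd : P.natDegree = 0
  · obtain ⟨a, rfl⟩ := Polynomial.natDegree_eq_zero.mp hPd
    simp
  · have hq : (X + C (1:ℝ)).natDegree ≠ 0 := by
      rw [Polynomial.natDegree_X_add_C]; exact one_ne_zero
    have hlc : (P.comp (X + C 1)).leadingCoeff = P.leadingCoeff := by
      rw [Polynomial.leadingCoeff_comp hq, (Polynomial.monic_X_add_C (1:ℝ)).leadingCoeff,
        one_pow, mul_one]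
    have hcomp0 : P.comp (X + C 1) ≠ 0 := by
      intro hc
      apply hP0
      rw [← Polynomial.leadingCoeff_eq_zero, ← hlc, hc, Polynomial.leadingCoeff_zero]
    have hnd : (P.comp (X + C 1)).natDegree = P.natDegree := by
      rw [Polynomial.natDegree_comp, Polynomial.natDegree_X_add_C, mul_one]
    have hdeg : (P.comp (X + C 1)).degree = P.degree := by
      rw [Polynomial.degree_eq_natDegree hcomp0, Polynomial.degree_eq_natDegree hP0, hnd]
    have hlt := Polynomial.degree_sub_lt hdeg hcomp0 hlc
    rw [hdeg] at hlt
    refine lt_of_lt_of_le hlt ?_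
    rw [Polynomial.degree_eq_natDegree hP0] at h ⊢
    exact_mod_cast Nat.lt_succ_iff.mp (by exact_mod_cast h)

lemma polyDiff (N : ℕ) (P : ℝ[X]) (hP : P.degree < ((N:ℕ) : WithBot ℕ)) (x : ℤ) :
    ∑ k ∈ Finset.range (N+1), (-1:ℝ)^k * (N.choose k) * P.eval ((x+k : ℤ) : ℝ) = 0 := by
  induction N generalizing P x with
  | zero =>
    have : P = 0 := by
      rw [← Polynomial.degree_eq_bot]
      simpa using hP
    simp [this]
  | succ N ih =>
    set Q := P.comp (X + C 1) - P with hQdef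
    have hQ : Q.degree < ((N:ℕ) : WithBot ℕ) := degQ N P (by exact_mod_cast hP)
    have hQe : ∀ y : ℤ, Q.eval ((y:ℤ):ℝ) = P.eval ((y+1 : ℤ):ℝ) - P.eval ((y:ℤ):ℝ) := by
      intro y
      simp [hQdef, Polynomial.eval_comp]
    rw [show N + 1 + 1 = N + 2 from rfl, sumIdent N (fun k => P.eval ((x+k:ℤ):ℝ))]
    have hterm : ∀ k ∈ Finset.range (N+1), (-1:ℝ)^k * (N.choose k) *
        (P.eval ((x+(k:ℕ):ℤ):ℝ) - P.eval ((x + ((k + 1 : ℕ) : ℤ) : ℤ):ℝ))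
        = -((-1:ℝ)^k * (N.choose k) * Q.eval ((x+k:ℤ):ℝ)) := by
      intro k _
      rw [hQe (x+k)]
      push_cast
      ring
    rw [Finset.sum_congr rfl hterm, Finset.sum_neg_distrib, ih Q hQ x, neg_zero]

lemma doubleDiff (d1 d2 : ℕ) (P : ℝ[X]) (hP : P.degree < ((d1 + d2 : ℕ) : WithBot ℕ)) (x : ℤ) :
    ∑ k ∈ Finset.range (d1+1), ∑ l ∈ Finset.range (d2+1),
      (-1:ℝ)^(k+l) * (d1.choose k) * (d2.choose l) * P.eval ((x+k+l : ℤ) : ℝ) = 0 := by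
  induction d1 generalizing P x with
  | zero =>
    rw [show (0:ℕ)+1 = 1 from rfl, Finset.range_one, Finset.sum_singleton]
    have := polyDiff d2 P (by simpa using hP) x
    rw [← this]
    apply Finset.sum_congr rfl
    intro l _
    rw [Nat.choose_zero_right]
    push_cast
    ring_nf
  | succ d1 ih =>
    set Q := P.comp (X + C 1) - P with hQdef
    have hQ : Q.degree < ((d1 + d2 : ℕ) : WithBot ℕ) :=
      degQ (d1 + d2) P (by rw [show d1+1+d2 = d1+d2+1 from by omega] at hP; exact hP)
    have hQe : ∀ y : ℤ, Q.eval ((y:ℤ):ℝ) = P.eval ((y+1 : ℤ):ℝ) - P.eval ((y:ℤ):ℝ) := by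
      intro y
      simp [hQdef, Polynomial.eval_comp]
    have hsplit : ∀ k ∈ Finset.range (d1+2),
        ∑ l ∈ Finset.range (d2+1),
          (-1:ℝ)^(k+l) * ((d1+1).choose k) * (d2.choose l) * P.eval ((x+k+l : ℤ) : ℝ)
        = (-1:ℝ)^k * ((d1+1).choose k) *
            (∑ l ∈ Finset.range (d2+1), (-1:ℝ)^l * (d2.choose l) * P.eval ((x+k+l : ℤ) : ℝ)) := by
      intro k _
      rw [Finset.mul_sum]
      apply Finset.sum_congr rfl
      intro l _
      rw [pow_add]
      ring
    rw [Finset.sum_congr rfl hsplit,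
      sumIdent d1 (fun k => ∑ l ∈ Finset.range (d2+1),
        (-1:ℝ)^l * (d2.choose l) * P.eval ((x+k+l : ℤ) : ℝ))]
    have hterm : ∀ k ∈ Finset.range (d1+1), (-1:ℝ)^k * (d1.choose k) *
        ((∑ l ∈ Finset.range (d2+1), (-1:ℝ)^l * (d2.choose l) * P.eval ((x+(k:ℕ)+l : ℤ) : ℝ))
          - ∑ l ∈ Finset.range (d2+1), (-1:ℝ)^l * (d2.choose l) * P.eval ((x+((k+1:ℕ):ℤ)+l : ℤ) : ℝ))
        = -((-1:ℝ)^k * (d1.choose k) *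
            (∑ l ∈ Finset.range (d2+1), (-1:ℝ)^l * (d2.choose l) * Q.eval ((x+k+l : ℤ) : ℝ))) := by
      intro k _
      rw [← Finset.sum_sub_distrib]
      have hinner : ∀ l ∈ Finset.range (d2+1),
          ((-1:ℝ)^l * (d2.choose l) * P.eval ((x+(k:ℕ)+l : ℤ):ℝ)
            - (-1:ℝ)^l * (d2.choose l) * P.eval ((x+((k+1:ℕ):ℤ)+l : ℤ):ℝ))
          = -((-1:ℝ)^l * (d2.choose l) * Q.eval ((x+k+l : ℤ):ℝ)) := by
        intro l _
        rw [hQe (x+k+l)]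
        push_cast
        ring
      rw [Finset.sum_congr rfl hinner, Finset.sum_neg_distrib]
      ring
    rw [Finset.sum_congr rfl hterm, Finset.sum_neg_distrib]
    have hmerge : ∀ k ∈ Finset.range (d1+1),
        (-1:ℝ)^k * (d1.choose k) *
          (∑ l ∈ Finset.range (d2+1), (-1:ℝ)^l * (d2.choose l) * Q.eval ((x+k+l : ℤ):ℝ))
        = ∑ l ∈ Finset.range (d2+1),
            (-1:ℝ)^(k+l) * (d1.choose k) * (d2.choose l) * Q.eval ((x+k+l : ℤ):ℝ) := by
      intro k _
      rw [Finset.mul_sum]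
      apply Finset.sum_congr rfl
      intro l _
      rw [pow_add]
      ring
    rw [Finset.sum_congr rfl hmerge, ih Q hQ x, neg_zero]

lemma neg_one_pow_sub' {l d : ℕ} (h : l ≤ d) : ((-1:ℝ))^(d-l) = (-1)^d * (-1)^l := by
  conv_rhs => rw [show d = (d-l)+l from (Nat.sub_add_cancel h).symm]
  rw [pow_add, mul_assoc, ← pow_add, ← two_mul, pow_mul]
  norm_num

lemma core_case (d : ℕ) (f : ℤ → ℝ) (P : ℝ[X]) (hP : P.degree < ((2*d : ℕ) : WithBot ℕ))
    (i : ℤ) (hag : ∀ x : ℤ, i - d ≤ x → x ≤ i + d → f x = P.eval (x : ℝ)) :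
    ∑ l ∈ Finset.range (d+1), ∑ k ∈ Finset.range (d+1),
      ((-1:ℝ)^(d-l) * (d.choose l)) * (((-1:ℝ)^(d-k) * (d.choose k)) * f (i+l-k)) = 0 := by
  have key := doubleDiff d d P (by rw [show d + d = 2*d from by omega]; exact hP) (i - d)
  have hstep : ∀ l ∈ Finset.range (d+1),
      ∑ k ∈ Finset.range (d+1),
        ((-1:ℝ)^(d-l) * (d.choose l)) * (((-1:ℝ)^(d-k) * (d.choose k)) * f (i+l-k))
      = ∑ k ∈ Finset.range (d+1),
          (-1:ℝ)^d * ((-1:ℝ)^(l+k) * (d.choose l) * (d.choose k) *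
            P.eval ((i - d + l + k : ℤ) : ℝ)) := by
    intro l hl
    have hl' : l ≤ d := by simpa [Nat.lt_succ_iff] using hl
    rw [← Finset.sum_range_reflect]
    apply Finset.sum_congr rfl
    intro k hk
    have hk' : k ≤ d := by simpa [Nat.lt_succ_iff] using hk
    rw [show d + 1 - 1 - k = d - k from by omega]
    rw [hag (i + (l:ℤ) - ((d - k : ℕ) : ℤ)) (by push_cast [Nat.cast_sub hk']; omega)
      (by push_cast [Nat.cast_sub hk']; omega)]
    rw [show d - (d - k) = k from by omega, Nat.choose_symm hk']
    rw [show ((i + ↑l - ↑(d - k) : ℤ) : ℝ) = ((i - ↑d + ↑l + ↑k : ℤ) : ℝ) from by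
      push_cast [Nat.cast_sub hk']; ring]
    rw [neg_one_pow_sub' hl', pow_add]
    ring
  rw [Finset.sum_congr rfl hstep]
  simp only [← Finset.mul_sum]
  rw [key, mul_zero]

lemma exists_interp (dd : ℕ) (u v : ℤ) (huv : u + dd ≤ v) (y0 y1 : ℝ) :
    ∃ P : ℝ[X], P.degree < ((2*dd : ℕ) : WithBot ℕ) ∧
      (∀ x : ℤ, u ≤ x → x ≤ u+dd-1 → P.eval (x:ℝ) = y0) ∧
      (∀ x : ℤ, v ≤ x → x ≤ v+dd-1 → P.eval (x:ℝ) = y1) := by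
  classical
  set t : Finset ℤ := Finset.Icc u (u+dd-1) ∪ Finset.Icc v (v+dd-1) with ht
  have hinj : Set.InjOn (fun x : ℤ => (x : ℝ)) t := Int.cast_injective.injOn
  set rfun : ℤ → ℝ := fun x => if x ≤ u+dd-1 then y0 else y1 with hrfun
  refine ⟨Lagrange.interpolate t (fun x : ℤ => (x : ℝ)) rfun, ?_, ?_, ?_⟩
  · have hdisj : Disjoint (Finset.Icc u (u+dd-1)) (Finset.Icc v (v+dd-1)) := by
      rw [Finset.disjoint_left]
      intro x hx hx'
      rw [Finset.mem_Icc] at hx hx'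
      omega
    have hcard : t.card = 2*dd := by
      rw [ht, Finset.card_union_of_disjoint hdisj, Int.card_Icc, Int.card_Icc]
      omega
    have := Lagrange.degree_interpolate_lt rfun hinj
    rwa [hcard] at this
  · intro x h1 h2
    have hx : x ∈ t := by
      simp only [ht, Finset.mem_union, Finset.mem_Icc]
      omega
    rw [show ((x:ℤ):ℝ) = (fun x : ℤ => (x:ℝ)) x from rfl,
      Lagrange.eval_interpolate_at_node rfun hinj hx, hrfun]
    simp [h2]
  · intro x h1 h2
    have hx : x ∈ t := by
      simp only [ht, Finset.mem_union, Finset.mem_Icc]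
      omega
    rw [show ((x:ℤ):ℝ) = (fun x : ℤ => (x:ℝ)) x from rfl,
      Lagrange.eval_interpolate_at_node rfun hinj hx, hrfun]
    have : ¬ (x ≤ u+dd-1) := by omega
    simp [this]

lemma rowEntry (d n : ℕ) (i : Fin (n-d)) (j : Fin n) :
    diffMatrix d n i j = ∑ k ∈ Finset.range (d+1),
      if ((j:ℕ):ℤ) = (i:ℕ) + k then ((-1:ℝ)^(d-k) * (d.choose k)) else 0 := by
  unfold diffMatrix
  by_cases h : (i:ℕ) ≤ (j:ℕ) ∧ (j:ℕ) ≤ (i:ℕ) + d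
  · rw [if_pos h, Finset.sum_eq_single ((j:ℕ) - (i:ℕ))]
    · rw [if_pos (by omega)]
    · intro k hk hne
      rw [if_neg]
      simp only [Finset.mem_range] at hk
      omega
    · intro hmem
      exfalso
      apply hmem
      simp only [Finset.mem_range]
      omega
  · rw [if_neg h]
    symm
    apply Finset.sum_eq_zero
    intro k hk
    rw [if_neg]
    simp only [Finset.mem_range] at hk
    omega

lemma colsum (d n : ℕ) (z : Fin (n-d) → ℝ) (Z : ℤ → ℝ)
    (hz : ∀ i : Fin (n-d), z i = Z ((i:ℕ) : ℤ))
    (hZ0 : ∀ x : ℤ, (x < 0 ∨ ((n-d : ℕ):ℤ) ≤ x) → Z x = 0)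
    (j : Fin n) :
    ∑ i : Fin (n-d), diffMatrix d n i j * z i
      = ∑ k ∈ Finset.range (d+1), ((-1:ℝ)^(d-k) * (d.choose k)) * Z (((j:ℕ):ℤ) - k) := by
  have main : ∀ k : ℕ, ∑ i : Fin (n-d),
      (if ((j:ℕ):ℤ) = (i:ℕ) + k then ((-1:ℝ)^(d-k) * (d.choose k)) else 0) * z i
      = ((-1:ℝ)^(d-k) * (d.choose k)) * Z (((j:ℕ):ℤ) - k) := by
    intro k
    by_cases hcase : 0 ≤ ((j:ℕ):ℤ) - k ∧ ((j:ℕ):ℤ) - k < ((n-d:ℕ):ℤ)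
    · have hik : (j:ℕ) - k < n - d := by omega
      set i0 : Fin (n-d) := ⟨(j:ℕ) - k, hik⟩ with hi0
      have hval : (i0:ℕ) = (j:ℕ) - k := rfl
      have hval2 : ((⟨(j:ℕ) - k, hik⟩ : Fin (n-d)) : ℕ) = (j:ℕ) - k := rfl
      rw [Finset.sum_eq_single i0]
      · rw [if_pos (by omega), hz i0]
        rw [show ((i0:ℕ):ℤ) = ((j:ℕ):ℤ) - k from by omega]
      · intro b _ hbne
        rw [if_neg, zero_mul]
        intro hc
        apply hbne
        apply Fin.ext
        omega
      · intro h
        exact absurd (Finset.mem_univ i0) h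
    · rw [hZ0 _ (by omega), mul_zero]
      apply Finset.sum_eq_zero
      intro b _
      rw [if_neg, zero_mul]
      have := b.isLt
      intro hc
      omega
  calc ∑ i : Fin (n-d), diffMatrix d n i j * z i
      = ∑ i : Fin (n-d), ∑ k ∈ Finset.range (d+1),
          (if ((j:ℕ):ℤ) = (i:ℕ) + k then ((-1:ℝ)^(d-k) * (d.choose k)) else 0) * z i := by
        apply Finset.sum_congr rfl
        intro i _
        rw [rowEntry d n i j, Finset.sum_mul]
    _ = ∑ k ∈ Finset.range (d+1), ∑ i : Fin (n-d),
          (if ((j:ℕ):ℤ) = (i:ℕ) + k then ((-1:ℝ)^(d-k) * (d.choose k)) else 0) * z i :=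
        Finset.sum_comm
    _ = _ := Finset.sum_congr rfl fun k _ => main k

lemma rowsum (d n : ℕ) (w : Fin n → ℝ) (W : ℤ → ℝ) (hw : ∀ j : Fin n, w j = W ((j:ℕ):ℤ))
    (i : Fin (n-d)) :
    ∑ j : Fin n, diffMatrix d n i j * w j
      = ∑ l ∈ Finset.range (d+1), ((-1:ℝ)^(d-l) * (d.choose l)) * W (((i:ℕ):ℤ) + l) := by
  have main : ∀ l : ℕ, l < d + 1 → ∑ j : Fin n,
      (if ((j:ℕ):ℤ) = (i:ℕ) + l then ((-1:ℝ)^(d-l) * (d.choose l)) else 0) * w j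
      = ((-1:ℝ)^(d-l) * (d.choose l)) * W (((i:ℕ):ℤ) + l) := by
    intro l hl
    have hin : (i:ℕ) + l < n := by
      have := i.isLt
      omega
    set j0 : Fin n := ⟨(i:ℕ) + l, hin⟩ with hj0
    have hval : (j0:ℕ) = (i:ℕ) + l := rfl
    have hval2 : ((⟨(i:ℕ) + l, hin⟩ : Fin n) : ℕ) = (i:ℕ) + l := rfl
    rw [Finset.sum_eq_single j0]
    · rw [if_pos (by omega), hw j0]
      rw [show ((j0:ℕ):ℤ) = ((i:ℕ):ℤ) + l from by omega]
    · intro b _ hbne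
      rw [if_neg, zero_mul]
      intro hc
      apply hbne
      apply Fin.ext
      omega
    · intro h
      exact absurd (Finset.mem_univ j0) h
  calc ∑ j : Fin n, diffMatrix d n i j * w j
      = ∑ j : Fin n, ∑ l ∈ Finset.range (d+1),
          (if ((j:ℕ):ℤ) = (i:ℕ) + l then ((-1:ℝ)^(d-l) * (d.choose l)) else 0) * w j := by
        apply Finset.sum_congr rfl
        intro j _
        rw [rowEntry d n i j, Finset.sum_mul]
    _ = ∑ l ∈ Finset.range (d+1), ∑ j : Fin n,
          (if ((j:ℕ):ℤ) = (i:ℕ) + l then ((-1:ℝ)^(d-l) * (d.choose l)) else 0) * w j :=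
        Finset.sum_comm
    _ = _ := Finset.sum_congr rfl fun l hl => main l (Finset.mem_range.mp hl)

lemma isUnit_BBt (d n : ℕ) (S : Finset (Fin (n-d))) :
    IsUnit ((rowSub (diffMatrix d n) S * (rowSub (diffMatrix d n) S)ᵀ).det) := by
  classical
  set B := rowSub (diffMatrix d n) S with hB
  rw [isUnit_iff_ne_zero]
  intro hdet
  obtain ⟨x, hx0, hxv⟩ := (Matrix.exists_mulVec_eq_zero_iff).mpr hdet
  have hy : Bᵀ.mulVec x = 0 := by
    have h1 : x ⬝ᵥ ((B * Bᵀ).mulVec x) = 0 := by rw [hxv, dotProduct_zero]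
    rw [← Matrix.mulVec_mulVec, Matrix.dotProduct_mulVec, ← Matrix.mulVec_transpose] at h1
    exact dotProduct_self_eq_zero.mp h1
  apply hx0
  by_contra hxne
  have hT : (Finset.univ.filter (fun p : {i // i ∈ S} => x p ≠ 0)).Nonempty := by
    rw [Finset.filter_nonempty_iff]
    by_contra hc
    push_neg at hc
    apply hxne
    funext p
    exact hc p (Finset.mem_univ p)
  obtain ⟨p0, hp0mem, hp0min⟩ := Finset.exists_min_image _
    (fun p : {i // i ∈ S} => ((p : Fin (n-d)) : ℕ)) hT
  rw [Finset.mem_filter] at hp0mem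
  have hp0ne : x p0 ≠ 0 := hp0mem.2
  have hlt : ((p0 : Fin (n-d)) : ℕ) < n := by
    have := (p0 : Fin (n-d)).isLt
    omega
  set j0 : Fin n := ⟨((p0 : Fin (n-d)) : ℕ), hlt⟩ with hj0
  have hval : (j0 : ℕ) = ((p0 : Fin (n-d)) : ℕ) := rfl
  have hzero : (Bᵀ.mulVec x) j0 = 0 := by rw [hy]; rfl
  have hsum : (Bᵀ.mulVec x) j0 = ∑ q : {i // i ∈ S}, diffMatrix d n (q : Fin (n-d)) j0 * x q := by
    simp [Matrix.mulVec, dotProduct, Matrix.transpose_apply, hB, rowSub,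
      Matrix.submatrix_apply]
  rw [hsum, Finset.sum_eq_single p0] at hzero
  · have hcond : ((p0 : Fin (n-d)) : ℕ) ≤ (j0 : ℕ) ∧ (j0 : ℕ) ≤ ((p0 : Fin (n-d)) : ℕ) + d := by
      omega
    rw [diffMatrix, if_pos hcond] at hzero
    rw [show (j0:ℕ) - ((p0 : Fin (n-d)) : ℕ) = 0 from by omega] at hzero
    simp at hzero
    exact hp0ne hzero
  · intro q _ hqne
    by_cases hxq : x q = 0
    · rw [hxq, mul_zero]
    · have hqmem : q ∈ Finset.univ.filter (fun p : {i // i ∈ S} => x p ≠ 0) := by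
        rw [Finset.mem_filter]
        exact ⟨Finset.mem_univ q, hxq⟩
      have hge := hp0min q hqmem
      have hne : ((q : Fin (n-d)) : ℕ) ≠ ((p0 : Fin (n-d)) : ℕ) := by
        intro hc
        exact hqne (Subtype.ext (Fin.ext hc))
      rw [diffMatrix, if_neg (by omega), zero_mul]
  · intro h
    exact absurd (Finset.mem_univ p0) h


end AuxLemmas

/-- Staircase drift identity: if two change points `τ₁ < τ₂` carry the same sign `s`,
`A` is the union of the two corresponding augmented boundary windows,
`S = Aᶜ` and `v = s · Σ_{i ∈ A} (D_i)ᵀ`, then every coordinate of `(D_S D_Sᵀ)⁻¹ D_S v`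
strictly between the two windows equals `−s`.  A row `i : Fin (n - (r+1))` represents
the 1-indexed row `i + 1` of `D = D^{(r+1)}`. -/
theorem stmt16 (r n : ℕ) (hn : r + 1 < n) (τ₁ τ₂ : ℕ) (s : ℝ) (hs : s = 1 ∨ s = -1)
    (h1 : rb r + 1 ≤ τ₁)
    (h2 : τ₁ + ra r + 1 < τ₂ - rb r)
    (h3 : τ₂ + ra r ≤ n - (r + 1)) :
    ∀ (A : Finset (Fin (n - (r + 1)))),
      A = Finset.univ.filter (fun i : Fin (n - (r + 1)) =>
        (τ₁ - rb r ≤ (i : ℕ) + 1 ∧ (i : ℕ) + 1 ≤ τ₁ + ra r) ∨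
        (τ₂ - rb r ≤ (i : ℕ) + 1 ∧ (i : ℕ) + 1 ≤ τ₂ + ra r)) →
      ∀ (v : Fin n → ℝ), v = (fun j => s * ∑ i ∈ A, diffMatrix (r + 1) n i j) →
      ∀ (t : Fin (n - (r + 1))) (ht : t ∈ Aᶜ),
        τ₁ + ra r < (t : ℕ) + 1 → (t : ℕ) + 1 < τ₂ - rb r →
        (((rowSub (diffMatrix (r + 1) n) Aᶜ * (rowSub (diffMatrix (r + 1) n) Aᶜ)ᵀ)⁻¹ *
            rowSub (diffMatrix (r + 1) n) Aᶜ).mulVec v) ⟨t, ht⟩ = -s := by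
  classical
  intro A hA v hv t ht ht1 ht2
  have hRA : ra r = (r + 1) / 2 := rfl
  have hRB : rb r = (r + 2) / 2 - 1 := rfl
  have hm : (n - (r + 1)) + (r + 1) = n := by omega
  set aZ : ℤ := (τ₁ : ℤ) - rb r - 1 with haZ
  set bZ : ℤ := (τ₂ : ℤ) + ra r - 1 with hbZ
  have haz : 0 ≤ aZ := by omega
  have hgap : aZ + 2*(r+1) ≤ bZ := by omega
  have hbm : bZ ≤ ((n - (r+1) : ℕ) : ℤ) - 1 := by omega
  -- membership translation
  have hmem : ∀ i : Fin (n - (r+1)), (i ∈ A ↔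
      ((aZ ≤ ((i:ℕ):ℤ) ∧ ((i:ℕ):ℤ) ≤ aZ + r) ∨ (bZ - r ≤ ((i:ℕ):ℤ) ∧ ((i:ℕ):ℤ) ≤ bZ))) := by
    intro i
    rw [hA, Finset.mem_filter]
    constructor
    · rintro ⟨-, h⟩
      omega
    · intro h
      exact ⟨Finset.mem_univ i, by omega⟩
  -- interpolation polynomials
  obtain ⟨p, hpdeg, hp0, hp1⟩ := exists_interp (r+1) (-(r+1 : ℤ)) aZ (by omega) 0 (-s)
  obtain ⟨q, hqdeg, hq1, hq0⟩ := exists_interp (r+1) (bZ - r) ((n - (r+1) : ℕ) : ℤ) (by omega) (-s) 0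
  set Z : ℤ → ℝ := fun x =>
    if x < 0 ∨ ((n - (r+1) : ℕ):ℤ) ≤ x then 0 else if x < aZ then p.eval x else if x ≤ bZ then -s
      else q.eval x with hZdef
  set z : Fin (n - (r+1)) → ℝ := fun i => Z ((i:ℕ):ℤ) with hzdef
  have hZ0 : ∀ x : ℤ, (x < 0 ∨ ((n - (r+1) : ℕ):ℤ) ≤ x) → Z x = 0 := by
    intro x hx
    rw [hZdef]
    simp only
    rw [if_pos hx]
  have hz : ∀ i : Fin (n - (r+1)), z i = Z ((i:ℕ):ℤ) := fun i => rfl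
  have hZmid : ∀ x : ℤ, aZ ≤ x → x ≤ bZ → Z x = -s := by
    intro x hx1 hx2
    rw [hZdef]
    simp only
    rw [if_neg (by omega), if_neg (by omega), if_pos hx2]
  -- the key cancellation
  have hkey : ∀ i0 : Fin (n - (r+1)), i0 ∈ Aᶜ →
      ∑ l ∈ Finset.range ((r+1)+1), ∑ k ∈ Finset.range ((r+1)+1),
        ((-1:ℝ)^((r+1)-l) * ((r+1).choose l)) *
          (((-1:ℝ)^((r+1)-k) * ((r+1).choose k)) * Z (((i0:ℕ):ℤ) + l - k)) = 0 := by
    intro i0 hi0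
    rw [Finset.mem_compl, hmem i0] at hi0
    push_neg at hi0
    have hles := i0.isLt
    -- case split : left / gap / right
    rcases (by omega : ((i0:ℕ):ℤ) < aZ ∨
        (aZ + (r+1) ≤ ((i0:ℕ):ℤ) ∧ ((i0:ℕ):ℤ) ≤ bZ - (r+1)) ∨ bZ < ((i0:ℕ):ℤ)) with hL | hG | hR
    · apply core_case (r+1) Z p (by exact_mod_cast hpdeg)
      intro x hx1 hx2
      rw [hZdef]
      simp only
      by_cases hc1 : x < 0
      · rw [if_pos (Or.inl hc1), hp0 x (by omega) (by omega)]
      · by_cases hc2 : x < aZ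
        · rw [if_neg (by omega), if_pos hc2]
        · rw [if_neg (by omega), if_neg hc2, if_pos (by omega),
            hp1 x (by omega) (by omega)]
    · apply core_case (r+1) Z (Polynomial.C (-s))
        (lt_of_le_of_lt (Polynomial.degree_C_le) (by
          have h20 : (0:ℕ) < 2*(r+1) := by omega
          exact_mod_cast h20))
      intro x hx1 hx2
      rw [hZmid x (by omega) (by omega), Polynomial.eval_C]
    · apply core_case (r+1) Z q (by exact_mod_cast hqdeg)
      intro x hx1 hx2
      rw [hZdef]
      simp only
      by_cases hc1 : ((n - (r+1) : ℕ):ℤ) ≤ x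
      · rw [if_pos (Or.inr hc1), hq0 x (by omega) (by omega)]
      · by_cases hc2 : x ≤ bZ
        · rw [if_neg (by omega), if_neg (by omega), if_pos hc2,
            hq1 x (by omega) (by omega)]
        · rw [if_neg (by omega), if_neg (by omega), if_neg hc2]
  -- matrix part
  set B := rowSub (diffMatrix (r + 1) n) Aᶜ with hB
  set M := B * Bᵀ with hM
  set u : {i // i ∈ Aᶜ} → ℝ := fun pp => z pp.1 with hu
  have hzA : ∀ i ∈ A, z i = -s := by
    intro i hiA
    rw [hz i, hZmid ((i:ℕ):ℤ) (by have := (hmem i).mp hiA; omega) (by have := (hmem i).mp hiA; omega)]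
  have hkey2 : ∀ i0 : Fin (n-(r+1)), i0 ∈ Aᶜ →
      ∑ j : Fin n, diffMatrix (r+1) n i0 j *
        (∑ i : Fin (n-(r+1)), diffMatrix (r+1) n i j * z i) = 0 := by
    intro i0 hi0
    set W : ℤ → ℝ := fun x => ∑ k ∈ Finset.range ((r+1)+1),
      ((-1:ℝ)^((r+1)-k) * ((r+1).choose k)) * Z (x - k) with hW
    have hwj : ∀ j : Fin n,
        (fun j : Fin n => ∑ i : Fin (n-(r+1)), diffMatrix (r+1) n i j * z i) j = W ((j:ℕ):ℤ) := by
      intro j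
      exact colsum (r+1) n z Z hz hZ0 j
    rw [rowsum (r+1) n _ W hwj i0]
    have hexp : ∀ l ∈ Finset.range ((r+1)+1),
        ((-1:ℝ)^((r+1)-l) * ((r+1).choose l)) * W (((i0:ℕ):ℤ) + l)
        = ∑ k ∈ Finset.range ((r+1)+1), ((-1:ℝ)^((r+1)-l) * ((r+1).choose l)) *
            (((-1:ℝ)^((r+1)-k) * ((r+1).choose k)) * Z (((i0:ℕ):ℤ) + l - k)) := by
      intro l _
      rw [hW]
      simp only
      rw [Finset.mul_sum]
    rw [Finset.sum_congr rfl hexp]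
    exact hkey i0 hi0
  have claim : M.mulVec u = B.mulVec v := by
    funext pp
    have h0 := hkey2 pp.1 pp.2
    have hsplit : ∀ j : Fin n, (∑ i : Fin (n-(r+1)), diffMatrix (r+1) n i j * z i)
        = -s * (∑ i ∈ A, diffMatrix (r+1) n i j)
          + ∑ qq : {i // i ∈ Aᶜ}, diffMatrix (r+1) n qq.1 j * z qq.1 := by
      intro j
      rw [← Finset.sum_add_sum_compl A (fun i => diffMatrix (r+1) n i j * z i)]
      congr 1
      · rw [Finset.mul_sum]
        apply Finset.sum_congr rfl
        intro i hiA
        rw [hzA i hiA]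
        ring
      · exact (Finset.sum_coe_sort Aᶜ (fun i => diffMatrix (r+1) n i j * z i)).symm
    have hLHS : (M.mulVec u) pp = ∑ j : Fin n, diffMatrix (r+1) n pp.1 j *
        (∑ qq : {i // i ∈ Aᶜ}, diffMatrix (r+1) n qq.1 j * z qq.1) := by
      rw [hM]
      simp only [Matrix.mulVec, dotProduct, Matrix.mul_apply, Matrix.transpose_apply,
        hB, rowSub, Matrix.submatrix_apply, id, hu]
      calc ∑ qq : {i // i ∈ Aᶜ}, (∑ j : Fin n,
              diffMatrix (r+1) n pp.1 j * diffMatrix (r+1) n qq.1 j) * z qq.1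
          = ∑ qq : {i // i ∈ Aᶜ}, ∑ j : Fin n,
              diffMatrix (r+1) n pp.1 j * (diffMatrix (r+1) n qq.1 j * z qq.1) := by
            apply Finset.sum_congr rfl
            intro qq _
            rw [Finset.sum_mul]
            apply Finset.sum_congr rfl
            intro j _
            ring
        _ = ∑ j : Fin n, ∑ qq : {i // i ∈ Aᶜ},
              diffMatrix (r+1) n pp.1 j * (diffMatrix (r+1) n qq.1 j * z qq.1) :=
            Finset.sum_comm
        _ = _ := by
            apply Finset.sum_congr rfl
            intro j _
            rw [Finset.mul_sum]
    have hRHS : (B.mulVec v) pp = ∑ j : Fin n, diffMatrix (r+1) n pp.1 j *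
        (s * ∑ i ∈ A, diffMatrix (r+1) n i j) := by
      simp only [Matrix.mulVec, dotProduct, hB, rowSub, Matrix.submatrix_apply, id, hv]
    rw [hLHS, hRHS]
    have h0' : (∑ j : Fin n, diffMatrix (r+1) n pp.1 j *
        (-s * (∑ i ∈ A, diffMatrix (r+1) n i j)
          + ∑ qq : {i // i ∈ Aᶜ}, diffMatrix (r+1) n qq.1 j * z qq.1)) = 0 := by
      rw [← h0]
      apply Finset.sum_congr rfl
      intro j _
      rw [hsplit j]
    have hlin : ∀ j ∈ (Finset.univ : Finset (Fin n)), diffMatrix (r+1) n pp.1 j *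
        (-s * (∑ i ∈ A, diffMatrix (r+1) n i j)
          + ∑ qq : {i // i ∈ Aᶜ}, diffMatrix (r+1) n qq.1 j * z qq.1)
        = diffMatrix (r+1) n pp.1 j *
            (∑ qq : {i // i ∈ Aᶜ}, diffMatrix (r+1) n qq.1 j * z qq.1)
          - diffMatrix (r+1) n pp.1 j * (s * ∑ i ∈ A, diffMatrix (r+1) n i j) := by
      intro j _
      ring
    rw [Finset.sum_congr rfl hlin, Finset.sum_sub_distrib, sub_eq_zero] at h0'
    exact h0'
  have hdet : IsUnit M.det := by
    rw [hM, hB]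
    exact isUnit_BBt (r+1) n Aᶜ
  calc ((M⁻¹ * B).mulVec v) ⟨t, ht⟩
      = (M⁻¹.mulVec (B.mulVec v)) ⟨t, ht⟩ := by rw [Matrix.mulVec_mulVec]
    _ = (M⁻¹.mulVec (M.mulVec u)) ⟨t, ht⟩ := by rw [claim]
    _ = ((M⁻¹ * M).mulVec u) ⟨t, ht⟩ := by rw [Matrix.mulVec_mulVec]
    _ = u ⟨t, ht⟩ := by rw [Matrix.nonsing_inv_mul M hdet, Matrix.one_mulVec]
    _ = -s := by
        rw [hu]
        simp only
        rw [hz t, hZmid ((t:ℕ):ℤ) (by omega) (by omega)]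
end
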